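/- arXiv:1408.3528 — 4 statements merged into one kernel-verified Lean document; each statement's English description precedes it below -/
import Mathlib

section
/- Suppose A belongs to the class 𝒜, X is a Banach lattice which is an AL-space, and Φ satisfies condition δ2 and condition (*). Then the Banach lattice l_Φ^A(X) (with coordinatewise order) is uniformly monotone: for every ε > 0 there exists μ > 0 such that for all x̄, ȳ ∈ l_Φ^A(X) with x̄ ≥ 0, ȳ ≥ 0, ‖x̄‖_Φ^A = 1 and ‖ȳ‖_Φ^A ≥ ε, one has ‖x̄ + ȳ‖_Φ^A ≥ 1 + μ. -/
open Filter Topology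

/-- An Orlicz function: convex, nondecreasing, continuous on `[0,∞)`,
vanishing at `0`, positive on `(0,∞)`, tending to `∞` at `∞`. -/
structure IsOrliczFn (φ : ℝ → ℝ) : Prop where
  convexOn : ConvexOn ℝ (Set.Ici (0 : ℝ)) φ
  monotoneOn : MonotoneOn φ (Set.Ici (0 : ℝ))
  continuousOn : ContinuousOn φ (Set.Ici (0 : ℝ))
  map_zero : φ 0 = 0
  pos : ∀ t : ℝ, 0 < t → 0 < φ t
  tendsto_atTop : Filter.Tendsto φ Filter.atTop Filter.atTop

/-- A Musielak-Orlicz function: a sequence of Orlicz functions. -/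
def IsMusielakOrlicz (Φ : ℕ → ℝ → ℝ) : Prop := ∀ n, IsOrliczFn (Φ n)

/-- Condition δ₂ for a Musielak-Orlicz function. -/
def MOCondDelta2 (Φ : ℕ → ℝ → ℝ) : Prop :=
  ∃ K > (0 : ℝ), ∃ δ > (0 : ℝ), ∃ c : ℕ → ℝ, (∀ n, 0 ≤ c n) ∧ Summable c ∧
    ∀ n : ℕ, ∀ x : ℝ, 0 ≤ x → Φ n x ≤ δ → Φ n (2 * x) ≤ K * Φ n x + c n

/-- Condition (*) for a Musielak-Orlicz function. -/
def MOCondStar (Φ : ℕ → ℝ → ℝ) : Prop :=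
  ∀ ε : ℝ, ε ∈ Set.Ioo (0 : ℝ) 1 → ∃ δ > (0 : ℝ), ∀ n : ℕ, ∀ u : ℝ, 0 ≤ u →
    Φ n u < 1 - ε → Φ n ((1 + δ) * u) ≤ 1

/-- The class 𝒜 of infinite matrices: every column is nonzero. -/
def MatrixClassA (a : ℕ → ℕ → ℝ) : Prop := ∀ k, ∃ n, a n k ≠ 0

/-- A triangle matrix: nonzero diagonal, zero above the diagonal. -/
def IsTriangle (a : ℕ → ℕ → ℝ) : Prop := (∀ n, a n n ≠ 0) ∧ ∀ n k, n < k → a n k = 0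

/-- The `n`-th row sum `∑_k |a_{nk}| ‖x_k‖`. -/
noncomputable def rowSum {X : Type*} [NormedAddCommGroup X]
    (a : ℕ → ℕ → ℝ) (x : ℕ → X) (n : ℕ) : ℝ :=
  ∑' k, |a n k| * ‖x k‖

/-- Membership in the generalized Musielak-Orlicz sequence space `l_Φ^A(X)`:
`x` is a bounded sequence whose row sums are finite and
`∑_n φ_n(rowSum_n / σ) < ∞` for some `σ > 0`. -/
def MemL {X : Type*} [NormedAddCommGroup X]
    (Φ : ℕ → ℝ → ℝ) (a : ℕ → ℕ → ℝ) (x : ℕ → X) : Prop :=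
  (∃ C : ℝ, ∀ k, ‖x k‖ ≤ C) ∧ (∀ n, Summable fun k => |a n k| * ‖x k‖) ∧
    ∃ σ > (0 : ℝ), Summable fun n => Φ n (rowSum a x n / σ)

/-- Membership in `h_Φ^A(X)`: as `MemL` but for every `σ > 0`. -/
def MemH {X : Type*} [NormedAddCommGroup X]
    (Φ : ℕ → ℝ → ℝ) (a : ℕ → ℕ → ℝ) (x : ℕ → X) : Prop :=
  (∃ C : ℝ, ∀ k, ‖x k‖ ≤ C) ∧ (∀ n, Summable fun k => |a n k| * ‖x k‖) ∧
    ∀ σ > (0 : ℝ), Summable fun n => Φ n (rowSum a x n / σ)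

/-- The Luxemburg-type norm `‖x‖_Φ^A`. -/
noncomputable def ANorm {X : Type*} [NormedAddCommGroup X]
    (Φ : ℕ → ℝ → ℝ) (a : ℕ → ℕ → ℝ) (x : ℕ → X) : ℝ :=
  sInf {σ : ℝ | 0 < σ ∧ (Summable fun n => Φ n (rowSum a x n / σ)) ∧
    (∑' n, Φ n (rowSum a x n / σ)) ≤ 1}

/-- The modular `ρ_Φ^A(x) = ∑_n φ_n(∑_k |a_{nk}| ‖x_k‖)`. -/
noncomputable def rhoA {X : Type*} [NormedAddCommGroup X]
    (Φ : ℕ → ℝ → ℝ) (a : ℕ → ℕ → ℝ) (x : ℕ → X) : ℝ :=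
  ∑' n, Φ n (rowSum a x n)

/-- The `m`-th section of a sequence: first `m` coordinates kept, rest zero. -/
def sect {X : Type*} [Zero X] (x : ℕ → X) (m : ℕ) : ℕ → X :=
  fun k => if k < m then x k else 0

namespace IsOrliczFn
variable {φ : ℝ → ℝ}

lemma nonneg (h : IsOrliczFn φ) {u : ℝ} (hu : 0 ≤ u) : 0 ≤ φ u := by
  have := h.monotoneOn Set.self_mem_Ici hu hu
  simpa [h.map_zero] using this

lemma mono (h : IsOrliczFn φ) {u v : ℝ} (hu : 0 ≤ u) (huv : u ≤ v) : φ u ≤ φ v :=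
  h.monotoneOn hu (hu.trans huv) huv

lemma scale (h : IsOrliczFn φ) {t x : ℝ} (ht0 : 0 ≤ t) (ht1 : t ≤ 1) (hx : 0 ≤ x) :
    φ (t * x) ≤ t * φ x := by
  have := h.convexOn.2 (Set.self_mem_Ici) (hx : x ∈ Set.Ici (0:ℝ))
    (sub_nonneg.2 ht1) ht0 (by ring)
  simpa [h.map_zero] using this

lemma superlin (h : IsOrliczFn φ) {c x : ℝ} (hc : 1 ≤ c) (hx : 0 ≤ x) :
    c * φ x ≤ φ (c * x) := by
  have hc0 : 0 < c := lt_of_lt_of_le one_pos hc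
  have h1 : φ (c⁻¹ * (c * x)) ≤ c⁻¹ * φ (c * x) :=
    h.scale (by positivity) (by rw [inv_le_one_iff₀]; right; exact hc) (by positivity)
  rw [inv_mul_cancel_left₀ (ne_of_gt hc0)] at h1
  calc c * φ x ≤ c * (c⁻¹ * φ (c*x)) := mul_le_mul_of_nonneg_left h1 hc0.le
    _ = φ (c*x) := by field_simp

lemma superadd (h : IsOrliczFn φ) {u v : ℝ} (hu : 0 ≤ u) (hv : 0 ≤ v) :
    φ u + φ v ≤ φ (u + v) := by
  rcases eq_or_lt_of_le (add_nonneg hu hv) with h0 | h0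
  · have hu0 : u = 0 := by linarith
    have hv0 : v = 0 := by linarith
    simp [hu0, hv0, h.map_zero]
  · have h1 : φ u ≤ (u/(u+v)) * φ (u+v) := by
      have := h.scale (t := u/(u+v)) (x := u+v) (by positivity)
        (by rw [div_le_one h0]; linarith) (le_of_lt h0)
      rwa [div_mul_cancel₀ _ (ne_of_gt h0)] at this
    have h2 : φ v ≤ (v/(u+v)) * φ (u+v) := by
      have := h.scale (t := v/(u+v)) (x := u+v) (by positivity)
        (by rw [div_le_one h0]; linarith) (le_of_lt h0)
      rwa [div_mul_cancel₀ _ (ne_of_gt h0)] at this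
    have h3 : (u/(u+v)) * φ (u+v) + (v/(u+v)) * φ (u+v) = φ (u+v) := by
      field_simp
    linarith

lemma interp (h : IsOrliczFn φ) {x μ δ : ℝ} (hx : 0 ≤ x) (hδ : 0 < δ) (hμ0 : 0 ≤ μ)
    (hμδ : μ ≤ δ) :
    φ ((1+μ)*x) ≤ (1 - μ/δ) * φ x + (μ/δ) * φ ((1+δ)*x) := by
  have hb : (0:ℝ) ≤ μ/δ := by positivity
  have ha : (0:ℝ) ≤ 1 - μ/δ := by rw [sub_nonneg, div_le_one hδ]; exact hμδ
  have hmem : (1+δ)*x ∈ Set.Ici (0:ℝ) := by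
    have : (0:ℝ) ≤ (1+δ)*x := by positivity
    exact this
  have hcx := h.convexOn.2 (hx : x ∈ Set.Ici (0:ℝ)) hmem ha hb (by ring)
  have heq : (1 - μ/δ) • x + (μ/δ) • ((1+δ)*x) = (1+μ)*x := by
    simp only [smul_eq_mul]; field_simp; ring
  rw [heq] at hcx
  simpa using hcx

lemma small (h : IsOrliczFn φ) {γ ε : ℝ} (hγ : 0 < γ) (hε : 0 < ε) :
    ∃ η > 0, ∀ v : ℝ, 0 ≤ v → φ v ≤ η → φ (v/ε) ≤ γ := by
  have hct : ContinuousWithinAt φ (Set.Ici 0) 0 := h.continuousOn 0 Set.self_mem_Ici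
  have hev : ∀ᶠ t in 𝓝[≥] (0:ℝ), φ t < γ := by
    have ht : Tendsto φ (𝓝[≥] (0:ℝ)) (𝓝 0) := by
      have := hct.tendsto
      rwa [h.map_zero] at this
    exact ht.eventually_lt_const hγ
  obtain ⟨b, hb0, hb⟩ := mem_nhdsGE_iff_exists_Icc_subset.1 hev
  refine ⟨φ (ε * b) / 2, half_pos (h.pos _ (by positivity)), ?_⟩
  intro v hv hvle
  have hvb : v ≤ ε * b := by
    by_contra hgt
    push_neg at hgt
    have hm := h.mono (by positivity : (0:ℝ) ≤ ε*b) hgt.le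
    have hp := h.pos (ε*b) (by positivity)
    linarith
  have hdiv : v / ε ≤ b := by rw [div_le_iff₀ hε]; linarith [mul_comm b ε]
  exact (hb ⟨by positivity, hdiv⟩).le

end IsOrliczFn


set_option maxHeartbeats 1000000 in
lemma keyB (Φ : ℕ → ℝ → ℝ) (hΦ : IsMusielakOrlicz Φ) (hδ : MOCondDelta2 Φ)
    (hstar : MOCondStar Φ) {ε₀ : ℝ} (hε₀0 : 0 < ε₀) (hε₀1 : ε₀ < 1) :
    ∃ μ' > (0:ℝ), ∀ u : ℕ → ℝ, (∀ n, 0 ≤ u n) →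
      (∀ F : Finset ℕ, ∑ n ∈ F, Φ n (u n) ≤ 1 - ε₀) →
      ∀ F : Finset ℕ, ∑ n ∈ F, Φ n ((1 + μ') * u n) ≤ 1 := by
  classical
  obtain ⟨K, hK, δK, hδK, c, hc0, hcs, hδ2⟩ := hδ
  obtain ⟨δs, hδs, hstar'⟩ := hstar (ε₀/2) ⟨by linarith, by linarith⟩
  set K1 := max K 1 with hK1def
  have hK1 : (1:ℝ) ≤ K1 := le_max_right _ _
  have hKK1 : K ≤ K1 := le_max_left _ _
  set C := ∑' n, c n with hCdef
  have hC0 : 0 ≤ C := tsum_nonneg hc0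
  set D := K1 + C + (1/δK)*(1/δs) + 1 with hDdef
  have hD1 : (1:ℝ) ≤ D := by
    rw [hDdef]
    have h : (0:ℝ) ≤ (1/δK)*(1/δs) := by positivity
    linarith
  have hD0 : (0:ℝ) < D := by linarith
  refine ⟨min δs (min 1 (ε₀ / D)), by positivity, ?_⟩
  set μ' := min δs (min 1 (ε₀ / D)) with hμdef
  have hμ0 : 0 < μ' := by positivity
  have hμδs : μ' ≤ δs := min_le_left _ _
  have hμ1 : μ' ≤ 1 := le_trans (min_le_right _ _) (min_le_left _ _)
  have hμD : μ' ≤ ε₀ / D := le_trans (min_le_right _ _) (min_le_right _ _)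
  intro u hu0 hsum F
  have hterm : ∀ n, Φ n (u n) ≤ 1 - ε₀ := by
    intro n; simpa using hsum {n}
  have hstar1 : ∀ n, Φ n ((1+δs) * u n) ≤ 1 := fun n =>
    hstar' n (u n) (hu0 n) (by linarith [hterm n])
  set Fp := F.filter (fun n => Φ n (u n) ≤ δK) with hFp
  set Fn := F.filter (fun n => ¬ (Φ n (u n) ≤ δK)) with hFnd
  have hsplit : (∑ n ∈ Fp, Φ n ((1+μ') * u n)) + (∑ n ∈ Fn, Φ n ((1+μ') * u n))
      = ∑ n ∈ F, Φ n ((1+μ') * u n) :=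
    Finset.sum_filter_add_sum_filter_not F (fun n => Φ n (u n) ≤ δK) _
  have hsmall : ∑ n ∈ Fp, Φ n ((1+μ') * u n) ≤
      (∑ n ∈ Fp, Φ n (u n)) + μ' * (K1 + C) := by
    have hterm2 : ∀ n ∈ Fp, Φ n ((1+μ')*u n) ≤ Φ n (u n) + μ' * (K1 * Φ n (u n) + c n) := by
      intro n hn
      have hnP : Φ n (u n) ≤ δK := (Finset.mem_filter.1 hn).2
      have hφn := hΦ n
      have hφnn := hφn.nonneg (hu0 n)
      have h2 : Φ n (2 * u n) ≤ K1 * Φ n (u n) + c n := by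
        have ha := hδ2 n (u n) (hu0 n) hnP
        have hb : K * Φ n (u n) ≤ K1 * Φ n (u n) := mul_le_mul_of_nonneg_right hKK1 hφnn
        linarith
      have hi := hφn.interp (x := u n) (μ := μ') (δ := 1) (hu0 n) one_pos hμ0.le hμ1
      have h21 : ((1:ℝ)+1) = 2 := by norm_num
      rw [h21] at hi
      nlinarith [mul_nonneg hμ0.le hφnn]
    calc ∑ n ∈ Fp, Φ n ((1+μ')*u n)
        ≤ ∑ n ∈ Fp, (Φ n (u n) + μ' * (K1 * Φ n (u n) + c n)) := Finset.sum_le_sum hterm2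
      _ = (∑ n ∈ Fp, Φ n (u n)) + μ' * (K1 * (∑ n ∈ Fp, Φ n (u n)) + ∑ n ∈ Fp, c n) := by
          rw [Finset.sum_add_distrib, ← Finset.mul_sum, Finset.sum_add_distrib, ← Finset.mul_sum]
      _ ≤ (∑ n ∈ Fp, Φ n (u n)) + μ' * (K1 + C) := by
          have h1 : ∑ n ∈ Fp, Φ n (u n) ≤ 1 - ε₀ := hsum Fp
          have h2 : ∑ n ∈ Fp, c n ≤ C := Summable.sum_le_tsum Fp (fun i _ => hc0 i) hcs
          have h3 : K1 * (∑ n ∈ Fp, Φ n (u n)) ≤ K1 := by nlinarith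
          nlinarith
  have hlarge : ∑ n ∈ Fn, Φ n ((1+μ')*u n) ≤ (∑ n ∈ Fn, Φ n (u n)) + (1/δK) * (μ'/δs) := by
    have hterm2 : ∀ n ∈ Fn, Φ n ((1+μ')*u n) ≤ Φ n (u n) + μ'/δs := by
      intro n hn
      have hφn := hΦ n
      have hi := hφn.interp (x := u n) (μ := μ') (δ := δs) (hu0 n) hδs hμ0.le hμδs
      have hs1 := hstar1 n
      have hφnn := hφn.nonneg (hu0 n)
      have hr : (0:ℝ) ≤ μ'/δs := by positivity
      nlinarith [mul_nonneg hr hφnn, mul_le_mul_of_nonneg_left hs1 hr]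
    have hcard : (Fn.card : ℝ) ≤ 1/δK := by
      have h1 : (Fn.card : ℝ) * δK ≤ ∑ n ∈ Fn, Φ n (u n) := by
        have := Finset.card_nsmul_le_sum Fn (fun n => Φ n (u n)) δK
          (fun n hn => (le_of_lt (not_le.1 (Finset.mem_filter.1 hn).2)))
        simpa [nsmul_eq_mul] using this
      have h2 : ∑ n ∈ Fn, Φ n (u n) ≤ 1 - ε₀ := hsum Fn
      rw [le_div_iff₀ hδK]
      linarith
    calc ∑ n ∈ Fn, Φ n ((1+μ')*u n) ≤ ∑ n ∈ Fn, (Φ n (u n) + μ'/δs) :=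
          Finset.sum_le_sum hterm2
      _ = (∑ n ∈ Fn, Φ n (u n)) + (Fn.card : ℝ) * (μ'/δs) := by
          rw [Finset.sum_add_distrib, Finset.sum_const, nsmul_eq_mul]
      _ ≤ _ := by
          have hr : (0:ℝ) ≤ μ'/δs := by positivity
          have := mul_le_mul_of_nonneg_right hcard hr
          linarith
  have htot : ∑ n ∈ F, Φ n (u n) ≤ 1 - ε₀ := hsum F
  have hsum_split : (∑ n ∈ Fp, Φ n (u n)) + (∑ n ∈ Fn, Φ n (u n)) = ∑ n ∈ F, Φ n (u n) :=
    Finset.sum_filter_add_sum_filter_not F (fun n => Φ n (u n) ≤ δK) _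
  have hμfin : μ' * (K1 + C) + (1/δK)*(μ'/δs) ≤ ε₀ := by
    have heq : μ' * (K1 + C) + (1/δK)*(μ'/δs) = μ' * (D - 1) := by
      rw [hDdef]; field_simp; ring
    rw [heq]
    have h1 : μ' * (D-1) ≤ (ε₀/D) * (D-1) := mul_le_mul_of_nonneg_right hμD (by linarith)
    have h2 : (ε₀/D) * (D-1) ≤ ε₀ := by
      rw [div_mul_eq_mul_div, div_le_iff₀ hD0]; nlinarith
    exact h1.trans h2
  linarith [hsplit, hsum_split, hsmall, hlarge, htot]

set_option maxHeartbeats 1000000 in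
lemma keyC (Φ : ℕ → ℝ → ℝ) (hΦ : IsMusielakOrlicz Φ) (hδ : MOCondDelta2 Φ)
    {ε : ℝ} (hε : 0 < ε) :
    ∃ η > (0:ℝ), ∀ v : ℕ → ℝ, (∀ n, 0 ≤ v n) →
      (∀ F : Finset ℕ, ∑ n ∈ F, Φ n (v n) ≤ η) →
      ∀ F : Finset ℕ, ∑ n ∈ F, Φ n (v n / ε) ≤ 1/2 := by
  classical
  obtain ⟨K, hK, δK, hδK, c, hc0, hcs, hδ2⟩ := hδ
  set K1 := max K 1 with hK1def
  have hK1 : (1:ℝ) ≤ K1 := le_max_right _ _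
  have hKK1 : K ≤ K1 := le_max_left _ _
  have hK10 : (0:ℝ) < K1 := lt_of_lt_of_le one_pos hK1
  obtain ⟨m, hNm⟩ := exists_nat_gt (1/ε)
  have hcast : (m:ℝ) ≤ 2^m := by exact_mod_cast (Nat.lt_two_pow_self (n := m)).le
  have hm : 1/ε ≤ (2:ℝ)^m := hNm.le.trans hcast
  have hK1m : (0:ℝ) < K1^m := pow_pos hK10 m
  set S := (m:ℝ) * K1^m + 1 with hSdef
  have hS0 : (0:ℝ) < S := by
    have h1 : (0:ℝ) ≤ (m:ℝ)*K1^m := mul_nonneg (Nat.cast_nonneg m) (pow_nonneg hK10.le m)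
    rw [hSdef]; linarith
  set τ := min (δK/(2*S)) (1/(8*S)) with hτdef
  have hτ0 : (0:ℝ) < τ := by positivity
  obtain ⟨B, hB⟩ := summable_iff_vanishing.1 hcs (Set.Iio τ) (Iio_mem_nhds hτ0)
  choose ηf hηfpos hηf using fun n =>
    (hΦ n).small (γ := 1/(4*((B.card:ℝ)+1))) (by positivity) hε
  set b := (insert 0 B).inf' ⟨0, Finset.mem_insert_self _ _⟩ ηf with hbdef
  have hb0 : 0 < b := by
    rw [hbdef]; refine (Finset.lt_inf'_iff ..).2 ?_
    exact fun i _ => hηfpos i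
  have hbB : ∀ n ∈ B, b ≤ ηf n := fun n hn =>
    Finset.inf'_le _ (Finset.mem_insert_of_mem hn)
  refine ⟨min b (min (δK/(2*K1^m)) (1/(8*K1^m))), by positivity, ?_⟩
  set η := min b (min (δK/(2*K1^m)) (1/(8*K1^m))) with hηdef
  have hηb : η ≤ b := min_le_left _ _
  have hηδ : η ≤ δK/(2*K1^m) := le_trans (min_le_right _ _) (min_le_left _ _)
  have hη8 : η ≤ 1/(8*K1^m) := le_trans (min_le_right _ _) (min_le_right _ _)
  intro v hv0 hvsum F
  have hterm : ∀ n, Φ n (v n) ≤ η := by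
    intro n; simpa using hvsum {n}
  -- geometric sum bound
  have hgeom : ∀ j ≤ m, (∑ i ∈ Finset.range j, K1^i) ≤ (m:ℝ) * K1^m := by
    intro j hj
    calc (∑ i ∈ Finset.range j, K1^i) ≤ ∑ _i ∈ Finset.range j, K1^m :=
          Finset.sum_le_sum (fun i hi => pow_le_pow_right₀ hK1
            (le_trans (Finset.mem_range.1 hi).le hj))
      _ = (j:ℝ) * K1^m := by rw [Finset.sum_const, Finset.card_range, nsmul_eq_mul]
      _ ≤ (m:ℝ) * K1^m := by
          have : (j:ℝ) ≤ (m:ℝ) := by exact_mod_cast hj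
          nlinarith
  have hgeom0 : ∀ j : ℕ, (0:ℝ) ≤ ∑ i ∈ Finset.range j, K1^i :=
    fun j => Finset.sum_nonneg (fun i _ => pow_nonneg hK10.le i)
  -- the chain
  have chain : ∀ n, c n ≤ δK/(2*S) → ∀ j ≤ m,
      Φ n (2^j * v n) ≤ K1^j * Φ n (v n) + (∑ i ∈ Finset.range j, K1^i) * c n := by
    intro n hcn
    have hΦv : Φ n (v n) ≤ η := hterm n
    have hΦv0 : 0 ≤ Φ n (v n) := (hΦ n).nonneg (hv0 n)
    have hbound : ∀ j ≤ m,
        K1^j * Φ n (v n) + (∑ i ∈ Finset.range j, K1^i) * c n ≤ δK := by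
      intro j hj
      have h1 : K1^j * Φ n (v n) ≤ δK/2 := by
        have hpow : K1^j ≤ K1^m := pow_le_pow_right₀ hK1 hj
        have : K1^j * Φ n (v n) ≤ K1^m * (δK/(2*K1^m)) := by
          apply mul_le_mul hpow (hΦv.trans hηδ) hΦv0 (pow_nonneg hK10.le m)
        calc K1^j * Φ n (v n) ≤ K1^m * (δK/(2*K1^m)) := this
          _ = δK/2 := by field_simp
      have h2 : (∑ i ∈ Finset.range j, K1^i) * c n ≤ δK/2 := by
        calc (∑ i ∈ Finset.range j, K1^i) * c n ≤ ((m:ℝ)*K1^m) * (δK/(2*S)) := by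
              apply mul_le_mul (hgeom j hj) hcn (hc0 n) (by positivity)
          _ ≤ S * (δK/(2*S)) := by
              have : (m:ℝ)*K1^m ≤ S := by rw [hSdef]; linarith
              apply mul_le_mul_of_nonneg_right this (by positivity)
          _ = δK/2 := by field_simp
      linarith
    intro j hj
    induction j with
    | zero => simp
    | succ j ih =>
      have hjm : j ≤ m := le_trans (Nat.le_succ j) hj
      have ihj := ih hjm
      have hvj0 : (0:ℝ) ≤ 2^j * v n := mul_nonneg (by positivity) (hv0 n)
      have hδ2' : Φ n (2 * (2^j * v n)) ≤ K1 * Φ n (2^j * v n) + c n := by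
        have ha := hδ2 n (2^j * v n) hvj0 (ihj.trans (hbound j hjm))
        have hb' : K * Φ n (2^j * v n) ≤ K1 * Φ n (2^j * v n) :=
          mul_le_mul_of_nonneg_right hKK1 ((hΦ n).nonneg hvj0)
        linarith
      have heq : (2:ℝ)^(j+1) * v n = 2 * (2^j * v n) := by ring
      rw [heq]
      calc Φ n (2 * (2^j * v n)) ≤ K1 * Φ n (2^j * v n) + c n := hδ2'
        _ ≤ K1 * (K1^j * Φ n (v n) + (∑ i ∈ Finset.range j, K1^i) * c n) + c n := by
            nlinarith
        _ = K1^(j+1) * Φ n (v n) + (∑ i ∈ Finset.range (j+1), K1^i) * c n := by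
            rw [geom_sum_succ, pow_succ]; ring
  -- split F
  have hFsplit : (∑ n ∈ F ∩ B, Φ n (v n / ε)) + (∑ n ∈ F \ B, Φ n (v n / ε))
      = ∑ n ∈ F, Φ n (v n / ε) := Finset.sum_inter_add_sum_sdiff F B _
  have hIn : ∑ n ∈ F ∩ B, Φ n (v n / ε) ≤ 1/4 := by
    have hterm2 : ∀ n ∈ F ∩ B, Φ n (v n / ε) ≤ 1/(4*((B.card:ℝ)+1)) := by
      intro n hn
      have hnB : n ∈ B := (Finset.mem_inter.1 hn).2
      exact hηf n (v n) (hv0 n) ((hterm n).trans (hηb.trans (hbB n hnB)))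
    calc ∑ n ∈ F ∩ B, Φ n (v n / ε) ≤ (F ∩ B).card • (1/(4*((B.card:ℝ)+1))) :=
          Finset.sum_le_card_nsmul _ _ _ hterm2
      _ = ((F ∩ B).card : ℝ) * (1/(4*((B.card:ℝ)+1))) := by rw [nsmul_eq_mul]
      _ ≤ ((B.card : ℝ)) * (1/(4*((B.card:ℝ)+1))) := by
          have hc' : ((F ∩ B).card : ℝ) ≤ (B.card:ℝ) := by
            exact_mod_cast Finset.card_le_card (Finset.inter_subset_right)
          apply mul_le_mul_of_nonneg_right hc' (by positivity)
      _ ≤ 1/4 := by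
          rw [mul_one_div, div_le_div_iff₀ (by positivity) (by norm_num)]
          nlinarith [Nat.cast_nonneg (α := ℝ) B.card]
  have hOut : ∑ n ∈ F \ B, Φ n (v n / ε) ≤ 1/4 := by
    have hterm2 : ∀ n ∈ F \ B, Φ n (v n / ε) ≤
        K1^m * Φ n (v n) + (∑ i ∈ Finset.range m, K1^i) * c n := by
      intro n hn
      have hnB : n ∉ B := (Finset.mem_sdiff.1 hn).2
      have hcn : c n < τ := by
        have := hB {n} (by simp [Finset.disjoint_singleton_left, hnB])
        simpa using this
      have hcn' : c n ≤ δK/(2*S) := hcn.le.trans (min_le_left _ _)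
      have h1 : Φ n (v n / ε) ≤ Φ n (2^m * v n) := by
        apply (hΦ n).mono (div_nonneg (hv0 n) hε.le)
        rw [div_eq_mul_inv, mul_comm]
        rw [← one_div]
        exact mul_le_mul_of_nonneg_right hm (hv0 n)
      exact h1.trans (chain n hcn' m le_rfl)
    have hsumc : ∑ n ∈ F \ B, c n < τ := by
      have := hB (F \ B) Finset.sdiff_disjoint
      simpa using this
    calc ∑ n ∈ F \ B, Φ n (v n / ε)
        ≤ ∑ n ∈ F \ B, (K1^m * Φ n (v n) + (∑ i ∈ Finset.range m, K1^i) * c n) :=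
          Finset.sum_le_sum hterm2
      _ = K1^m * (∑ n ∈ F \ B, Φ n (v n))
          + (∑ i ∈ Finset.range m, K1^i) * (∑ n ∈ F \ B, c n) := by
          rw [Finset.sum_add_distrib, ← Finset.mul_sum, ← Finset.mul_sum]
      _ ≤ K1^m * η + S * (1/(8*S)) := by
          have h1 : K1^m * (∑ n ∈ F \ B, Φ n (v n)) ≤ K1^m * η :=
            mul_le_mul_of_nonneg_left (hvsum (F \ B)) (pow_nonneg hK10.le m)
          have h2 : (∑ i ∈ Finset.range m, K1^i) * (∑ n ∈ F \ B, c n) ≤ S * (1/(8*S)) := by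
            apply mul_le_mul
            · rw [hSdef]; linarith [hgeom m le_rfl]
            · exact hsumc.le.trans (min_le_right _ _)
            · exact Finset.sum_nonneg (fun i _ => hc0 i)
            · exact hS0.le
          linarith
      _ ≤ 1/8 + 1/8 := by
          have h1 : K1^m * η ≤ 1/8 := by
            calc K1^m * η ≤ K1^m * (1/(8*K1^m)) :=
                  mul_le_mul_of_nonneg_left hη8 (pow_nonneg hK10.le m)
              _ = 1/8 := by field_simp
          have h2 : S * (1/(8*S)) = 1/8 := by field_simp
          linarith
      _ ≤ 1/4 := by norm_num
  linarith

lemma rowSum_nonneg {X : Type*} [NormedAddCommGroup X]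
    (a : ℕ → ℕ → ℝ) (x : ℕ → X) (n : ℕ) : 0 ≤ rowSum a x n :=
  tsum_nonneg fun k => mul_nonneg (abs_nonneg _) (norm_nonneg _)

lemma rowSum_add {X : Type*} [NormedAddCommGroup X] [Lattice X] [HasSolidNorm X]
    [IsOrderedAddMonoid X]
    (hAL : ∀ u v : X, 0 ≤ u → 0 ≤ v → ‖u + v‖ = ‖u‖ + ‖v‖)
    (a : ℕ → ℕ → ℝ) {x y : ℕ → X} (hx0 : ∀ k, 0 ≤ x k) (hy0 : ∀ k, 0 ≤ y k)
    (hxs : ∀ n, Summable fun k => |a n k| * ‖x k‖)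
    (hys : ∀ n, Summable fun k => |a n k| * ‖y k‖)
    (n : ℕ) : rowSum a (x + y) n = rowSum a x n + rowSum a y n := by
  unfold rowSum
  calc ∑' k, |a n k| * ‖(x+y) k‖
      = ∑' k, (|a n k| * ‖x k‖ + |a n k| * ‖y k‖) := by
        apply tsum_congr
        intro k
        have h : ‖(x+y) k‖ = ‖x k‖ + ‖y k‖ := by
          rw [Pi.add_apply]; exact hAL _ _ (hx0 k) (hy0 k)
        rw [h]; ring
    _ = _ := Summable.tsum_add (hxs n) (hys n)


set_option maxHeartbeats 1000000 in
/-- if `A ∈ 𝒜`, `X` is an AL-space and `Φ ∈ δ₂` satisfies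
condition (*), then `l_Φ^A(X)` is uniformly monotone. -/
theorem lPhiA_uniformly_monotone
    {X : Type*} [NormedAddCommGroup X] [Lattice X] [HasSolidNorm X]
    [IsOrderedAddMonoid X] [NormedSpace ℝ X] [CompleteSpace X]
    (hAL : ∀ u v : X, 0 ≤ u → 0 ≤ v → ‖u + v‖ = ‖u‖ + ‖v‖)
    (Φ : ℕ → ℝ → ℝ) (hΦ : IsMusielakOrlicz Φ) (hδ : MOCondDelta2 Φ)
    (hstar : MOCondStar Φ)
    (a : ℕ → ℕ → ℝ) (hA : MatrixClassA a) :
    ∀ ε > (0 : ℝ), ∃ μ > (0 : ℝ),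
      ∀ x y : ℕ → X, MemL Φ a x → MemL Φ a y →
        (∀ k, 0 ≤ x k) → (∀ k, 0 ≤ y k) →
        ANorm Φ a x = 1 → ε ≤ ANorm Φ a y →
        1 + μ ≤ ANorm Φ a (x + y) := by
  intro ε hε
  obtain ⟨η2, hη20, hkeyC2⟩ := keyC Φ hΦ hδ (half_pos hε)
  have hε₀0 : (0:ℝ) < min η2 (1/2) := by positivity
  have hε₀1 : min η2 (1/2) < 1 := lt_of_le_of_lt (min_le_right _ _) (by norm_num)
  obtain ⟨μ₂, hμ₂0, hB2⟩ := keyB Φ hΦ hδ hstar hε₀0 hε₀1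
  obtain ⟨μh, hμh0, hBh⟩ := keyB Φ hΦ hδ hstar (by norm_num : (0:ℝ) < 1/2) (by norm_num)
  refine ⟨min (μ₂/2) 1, by positivity, ?_⟩
  intro x y hx hy hx0 hy0 hx1 hyε
  obtain ⟨-, hxs, σx, hσx0, hσxsum⟩ := hx
  obtain ⟨-, hys, σy, hσy0, hσysum⟩ := hy
  have hu0 : ∀ n, 0 ≤ rowSum a x n := rowSum_nonneg a x
  have hv0 : ∀ n, 0 ≤ rowSum a y n := rowSum_nonneg a y
  have hrs : ∀ n, rowSum a (x+y) n = rowSum a x n + rowSum a y n :=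
    rowSum_add hAL a hx0 hy0 hxs hys
  -- Claim 2 : some partial modular of y/2 exceeds η2
  have hclaim2 : ∃ F₀ : Finset ℕ, η2 < ∑ n ∈ F₀, Φ n (rowSum a y n / 2) := by
    by_contra hcon
    push_neg at hcon
    have hv20 : ∀ n, 0 ≤ rowSum a y n / 2 := fun n => div_nonneg (hv0 n) (by norm_num)
    have h1 := hkeyC2 (fun n => rowSum a y n / 2) hv20 hcon
    have h1' : ∀ F : Finset ℕ, ∑ n ∈ F, Φ n (rowSum a y n / ε) ≤ 1/2 := by
      intro F
      have hεne : ε ≠ 0 := ne_of_gt hε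
      have heq : ∀ n, (rowSum a y n / 2) / (ε/2) = rowSum a y n / ε := by
        intro n
        field_simp
      calc ∑ n ∈ F, Φ n (rowSum a y n / ε)
          = ∑ n ∈ F, Φ n ((rowSum a y n / 2) / (ε/2)) :=
            Finset.sum_congr rfl (fun n _ => by rw [heq n])
        _ ≤ 1/2 := h1 F
    have hw0 : ∀ n, 0 ≤ rowSum a y n / ε := fun n => div_nonneg (hv0 n) hε.le
    have h2 := hBh (fun n => rowSum a y n / ε) hw0 (by
      intro F
      have h' := h1' F
      norm_num
      linarith)
    have hμh1 : (0:ℝ) < 1 + μh := by linarith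
    have heqσ : ∀ n, rowSum a y n / (ε/(1+μh)) = (1+μh) * (rowSum a y n / ε) := by
      intro n
      rw [div_div_eq_mul_div, mul_comm (rowSum a y n) (1+μh), mul_div_assoc]
    have hpart : ∀ N : ℕ, ∑ n ∈ Finset.range N, Φ n (rowSum a y n / (ε/(1+μh))) ≤ 1 := by
      intro N
      calc ∑ n ∈ Finset.range N, Φ n (rowSum a y n / (ε/(1+μh)))
          = ∑ n ∈ Finset.range N, Φ n ((1+μh) * (rowSum a y n / ε)) :=
            Finset.sum_congr rfl (fun n _ => by rw [heqσ n])
        _ ≤ 1 := h2 (Finset.range N)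
    have hnn : ∀ n, 0 ≤ Φ n (rowSum a y n / (ε/(1+μh))) :=
      fun n => (hΦ n).nonneg (div_nonneg (hv0 n) (by positivity))
    have hsummable := summable_of_sum_range_le hnn hpart
    have hAle : ANorm Φ a y ≤ ε/(1+μh) := by
      apply csInf_le ⟨0, fun t ht => ht.1.le⟩
      exact ⟨by positivity, hsummable, Summable.tsum_le_of_sum_range_le hsummable hpart⟩
    have hlt : ε/(1+μh) < ε := by
      rw [div_lt_iff₀ hμh1]
      nlinarith
    linarith
  obtain ⟨F₀, hF₀⟩ := hclaim2
  -- the norm-defining set for x+y is nonempty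
  have hne : ({σ : ℝ | 0 < σ ∧ (Summable fun n => Φ n (rowSum a (x+y) n / σ)) ∧
      (∑' n, Φ n (rowSum a (x+y) n / σ)) ≤ 1}).Nonempty := by
    have hσs0 : (0:ℝ) < σx + σy := by linarith
    have hσsne : σx + σy ≠ 0 := ne_of_gt hσs0
    have hconv : ∀ n, Φ n ((rowSum a x n + rowSum a y n)/(σx + σy)) ≤
        (σx/(σx+σy)) * Φ n (rowSum a x n/σx) + (σy/(σx+σy)) * Φ n (rowSum a y n/σy) := by
      intro n
      have hcx := (hΦ n).convexOn.2
        (show rowSum a x n/σx ∈ Set.Ici (0:ℝ) from div_nonneg (hu0 n) hσx0.le)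
        (show rowSum a y n/σy ∈ Set.Ici (0:ℝ) from div_nonneg (hv0 n) hσy0.le)
        (show (0:ℝ) ≤ σx/(σx+σy) by positivity)
        (show (0:ℝ) ≤ σy/(σx+σy) by positivity)
        (by field_simp)
      have heq : (σx/(σx+σy)) • (rowSum a x n/σx) + (σy/(σx+σy)) • (rowSum a y n/σy)
          = (rowSum a x n + rowSum a y n)/(σx+σy) := by
        simp only [smul_eq_mul]
        field_simp
      rw [heq] at hcx
      simpa using hcx
    have hsummable1 : Summable (fun n => Φ n ((rowSum a x n + rowSum a y n)/(σx+σy))) := by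
      apply Summable.of_nonneg_of_le
        (fun n => (hΦ n).nonneg (div_nonneg (add_nonneg (hu0 n) (hv0 n)) hσs0.le)) hconv
      exact (hσxsum.mul_left _).add (hσysum.mul_left _)
    set T := ∑' n, Φ n ((rowSum a x n + rowSum a y n)/(σx+σy)) with hTdef
    have hT0 : 0 ≤ T := tsum_nonneg
      (fun n => (hΦ n).nonneg (div_nonneg (add_nonneg (hu0 n) (hv0 n)) hσs0.le))
    have hM1 : (1:ℝ) ≤ max T 1 := le_max_right _ _
    have hM0 : (0:ℝ) < max T 1 := lt_of_lt_of_le one_pos hM1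
    have hMne : max T 1 ≠ 0 := ne_of_gt hM0
    have hle : ∀ n, Φ n ((rowSum a x n + rowSum a y n)/((σx+σy) * max T 1)) ≤
        (max T 1)⁻¹ * Φ n ((rowSum a x n + rowSum a y n)/(σx+σy)) := by
      intro n
      have hsc := (hΦ n).scale (t := (max T 1)⁻¹)
        (x := (rowSum a x n + rowSum a y n)/(σx+σy))
        (by positivity) (inv_le_one_of_one_le₀ hM1)
        (div_nonneg (add_nonneg (hu0 n) (hv0 n)) hσs0.le)
      have heq2 : (max T 1)⁻¹ * ((rowSum a x n + rowSum a y n)/(σx+σy))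
          = (rowSum a x n + rowSum a y n)/((σx+σy) * max T 1) := by
        rw [mul_comm, ← div_eq_mul_inv, div_div]
      rwa [heq2] at hsc
    have hsummable2 : Summable
        (fun n => Φ n ((rowSum a x n + rowSum a y n)/((σx+σy) * max T 1))) := by
      apply Summable.of_nonneg_of_le
        (fun n => (hΦ n).nonneg (div_nonneg (add_nonneg (hu0 n) (hv0 n)) (by positivity))) hle
      exact hsummable1.mul_left _
    refine ⟨(σx+σy) * max T 1, by positivity, ?_, ?_⟩
    · simp only [hrs]
      exact hsummable2
    · simp only [hrs]
      calc ∑' n, Φ n ((rowSum a x n + rowSum a y n)/((σx+σy) * max T 1))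
          ≤ ∑' n, (max T 1)⁻¹ * Φ n ((rowSum a x n + rowSum a y n)/(σx+σy)) :=
            Summable.tsum_le_tsum hle hsummable2 (hsummable1.mul_left _)
        _ = (max T 1)⁻¹ * T := by rw [tsum_mul_left]
        _ ≤ 1 := by
            rw [inv_mul_le_iff₀ hM0, mul_one]
            exact le_max_left _ _
  -- conclusion
  show 1 + min (μ₂/2) 1 ≤ sInf _
  by_contra hcon
  push_neg at hcon
  have hbdd : BddBelow {σ : ℝ | 0 < σ ∧ (Summable fun n => Φ n (rowSum a (x+y) n / σ)) ∧
      (∑' n, Φ n (rowSum a (x+y) n / σ)) ≤ 1} := ⟨0, fun t ht => ht.1.le⟩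
  obtain ⟨σ, hσmem, hσlt⟩ := (csInf_lt_iff hbdd hne).1 hcon
  obtain ⟨hσ0, hσsum, hσtsum⟩ := hσmem
  have hμle : min (μ₂/2) 1 ≤ μ₂/2 := min_le_left _ _
  have hμle1 : min (μ₂/2) 1 ≤ 1 := min_le_right _ _
  have hσ2 : σ ≤ 2 := by linarith
  -- partial sums of the modular of (x+y)/σ are ≤ 1
  have hww : ∀ F : Finset ℕ, ∑ n ∈ F, Φ n ((rowSum a x n + rowSum a y n) / σ) ≤ 1 := by
    intro F
    have h1 : ∑ n ∈ F, Φ n (rowSum a (x+y) n / σ) ≤ 1 :=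
      le_trans (Summable.sum_le_tsum _ (fun i _ => (hΦ i).nonneg
        (div_nonneg (rowSum_nonneg a _ i) hσ0.le)) hσsum) hσtsum
    calc ∑ n ∈ F, Φ n ((rowSum a x n + rowSum a y n) / σ)
        = ∑ n ∈ F, Φ n (rowSum a (x+y) n / σ) :=
          Finset.sum_congr rfl (fun n _ => by rw [hrs n])
      _ ≤ 1 := h1
  -- superadditivity termwise
  have hsup : ∀ n, Φ n (rowSum a x n / σ) + Φ n (rowSum a y n / σ) ≤
      Φ n ((rowSum a x n + rowSum a y n) / σ) := by
    intro n
    have := (hΦ n).superadd (div_nonneg (hu0 n) hσ0.le) (div_nonneg (hv0 n) hσ0.le)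
    rwa [← add_div] at this
  -- the y-part contributes at least η2 on F₀
  have hvlow : η2 < ∑ n ∈ F₀, Φ n (rowSum a y n / σ) := by
    have h1 : ∀ n ∈ F₀, Φ n (rowSum a y n / 2) ≤ Φ n (rowSum a y n / σ) := by
      intro n _
      exact (hΦ n).mono (div_nonneg (hv0 n) (by norm_num))
        (div_le_div_of_nonneg_left (hv0 n) hσ0 hσ2)
    exact lt_of_lt_of_le hF₀ (Finset.sum_le_sum h1)
  -- hence the x-part is uniformly below 1 - ε₀
  have hu1 : ∀ F : Finset ℕ, ∑ n ∈ F, Φ n (rowSum a x n / σ) ≤ 1 - min η2 (1/2) := by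
    intro F
    have hsub : ∑ n ∈ F, Φ n (rowSum a x n / σ) ≤ ∑ n ∈ F ∪ F₀, Φ n (rowSum a x n / σ) :=
      Finset.sum_le_sum_of_subset_of_nonneg Finset.subset_union_left
        (fun i _ _ => (hΦ i).nonneg (div_nonneg (hu0 i) hσ0.le))
    have hsub2 : ∑ n ∈ F₀, Φ n (rowSum a y n / σ) ≤
        ∑ n ∈ F ∪ F₀, Φ n (rowSum a y n / σ) :=
      Finset.sum_le_sum_of_subset_of_nonneg Finset.subset_union_right
        (fun i _ _ => (hΦ i).nonneg (div_nonneg (hv0 i) hσ0.le))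
    have h4 : ∑ n ∈ F ∪ F₀, (Φ n (rowSum a x n / σ) + Φ n (rowSum a y n / σ))
        ≤ ∑ n ∈ F ∪ F₀, Φ n ((rowSum a x n + rowSum a y n) / σ) :=
      Finset.sum_le_sum (fun n _ => hsup n)
    rw [Finset.sum_add_distrib] at h4
    have h5 := hww (F ∪ F₀)
    have h6 : min η2 (1/2) ≤ η2 := min_le_left _ _
    linarith
  -- apply keyB to x/σ
  have h2 := hB2 (fun n => rowSum a x n / σ) (fun n => div_nonneg (hu0 n) hσ0.le) hu1
  have hμ₂1 : (0:ℝ) < 1 + μ₂ := by linarith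
  have heqσ : ∀ n, rowSum a x n / (σ/(1+μ₂)) = (1+μ₂) * (rowSum a x n / σ) := by
    intro n
    rw [div_div_eq_mul_div, mul_comm (rowSum a x n) (1+μ₂), mul_div_assoc]
  have hpart : ∀ N : ℕ, ∑ n ∈ Finset.range N, Φ n (rowSum a x n / (σ/(1+μ₂))) ≤ 1 := by
    intro N
    calc ∑ n ∈ Finset.range N, Φ n (rowSum a x n / (σ/(1+μ₂)))
        = ∑ n ∈ Finset.range N, Φ n ((1+μ₂) * (rowSum a x n / σ)) :=
          Finset.sum_congr rfl (fun n _ => by rw [heqσ n])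
      _ ≤ 1 := h2 (Finset.range N)
  have hnn : ∀ n, 0 ≤ Φ n (rowSum a x n / (σ/(1+μ₂))) :=
    fun n => (hΦ n).nonneg (div_nonneg (hu0 n) (by positivity))
  have hsummable := summable_of_sum_range_le hnn hpart
  have hAle : ANorm Φ a x ≤ σ/(1+μ₂) := by
    apply csInf_le ⟨0, fun t ht => ht.1.le⟩
    exact ⟨by positivity, hsummable, Summable.tsum_le_of_sum_range_le hsummable hpart⟩
  rw [hx1] at hAle
  have : 1 + μ₂ ≤ σ := by
    rwa [le_div_iff₀ hμ₂1, one_mul] at hAle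
  linarith
end

section
/- Suppose A belongs to the class 𝒜, X is a Banach lattice which is an AL-space, and Φ satisfies condition (*). Then h_Φ^A(X) (with coordinatewise order) is strictly monotone: for all x̄, ȳ ∈ h_Φ^A(X) with 0 ≤ ȳ ≤ x̄ and ȳ ≠ x̄, one has ‖ȳ‖_Φ^A < ‖x̄‖_Φ^A. -/
open Filter Topology

lemma IsOrliczFn.mono' {φ : ℝ → ℝ} (hφ : IsOrliczFn φ) {s t : ℝ} (hs : 0 ≤ s) (hst : s ≤ t) :
    φ s ≤ φ t := hφ.monotoneOn hs (hs.trans hst) hst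

lemma IsOrliczFn.nonneg_s14 {φ : ℝ → ℝ} (hφ : IsOrliczFn φ) {t : ℝ} (ht : 0 ≤ t) : 0 ≤ φ t := by
  have := hφ.mono' le_rfl ht
  simpa [hφ.map_zero] using this

lemma IsOrliczFn.lt {φ : ℝ → ℝ} (hφ : IsOrliczFn φ) {s t : ℝ} (hs : 0 ≤ s) (hst : s < t) :
    φ s < φ t := by
  rcases eq_or_lt_of_le hs with h | h
  · rw [← h, hφ.map_zero]; exact hφ.pos t (h ▸ hst)
  · have ht : 0 < t := h.trans hst
    have h1 : (0:ℝ) ≤ 1 - s / t := by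
      have : s / t < 1 := (div_lt_one ht).2 hst
      linarith
    have h2 : (0:ℝ) ≤ s / t := by positivity
    have key := hφ.convexOn.2 (Set.self_mem_Ici) (Set.mem_Ici.2 ht.le) h1 h2 (by ring)
    have heq : (1 - s / t) • (0:ℝ) + (s / t) • t = s := by
      simp only [smul_eq_mul, mul_zero, zero_add]; field_simp
    rw [heq, hφ.map_zero, smul_eq_mul, smul_eq_mul, mul_zero, zero_add] at key
    have : s / t * φ t < φ t := by
      have hφt : 0 < φ t := hφ.pos t ht
      have : s / t < 1 := (div_lt_one ht).2 hst
      nlinarith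
    linarith

lemma IsOrliczFn.combo {φ : ℝ → ℝ} (hφ : IsOrliczFn φ) {t δ : ℝ} (ht : 0 ≤ t)
    (hδ0 : 0 ≤ δ) (hδ1 : δ ≤ 1) :
    φ ((1 + δ) * t) ≤ (1 - δ) * φ t + δ * φ (2 * t) := by
  have key := hφ.convexOn.2 (Set.mem_Ici.2 ht) (Set.mem_Ici.2 (by linarith : (0:ℝ) ≤ 2 * t))
    (by linarith : (0:ℝ) ≤ 1 - δ) hδ0 (by ring)
  have heq : (1 - δ) • t + δ • (2 * t) = (1 + δ) * t := by
    simp only [smul_eq_mul]; ring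
  rw [heq, smul_eq_mul, smul_eq_mul] at key
  exact key


/-- if `A ∈ 𝒜`, `X` is an AL-space and `Φ` satisfies
condition (*), then `h_Φ^A(X)` is strictly monotone. -/
theorem hPhiA_strictly_monotone
    {X : Type*} [NormedAddCommGroup X] [Lattice X] [IsOrderedAddMonoid X] [HasSolidNorm X]
    [NormedSpace ℝ X] [CompleteSpace X]
    (hAL : ∀ u v : X, 0 ≤ u → 0 ≤ v → ‖u + v‖ = ‖u‖ + ‖v‖)
    (Φ : ℕ → ℝ → ℝ) (hΦ : IsMusielakOrlicz Φ) (hstar : MOCondStar Φ)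
    (a : ℕ → ℕ → ℝ) (hA : MatrixClassA a) :
    ∀ x y : ℕ → X, MemH Φ a x → MemH Φ a y →
      (∀ k, 0 ≤ y k) → (∀ k, y k ≤ x k) → y ≠ x →
      ANorm Φ a y < ANorm Φ a x := by
  intro x y hx hy hy0 hyx hne
  obtain ⟨hxB, hxS, hxM⟩ := hx
  obtain ⟨hyB, hyS, hyM⟩ := hy
  unfold ANorm
  set rx := rowSum a x with hrx
  set ry := rowSum a y with hry
  obtain ⟨k₀, hk₀⟩ : ∃ k, y k ≠ x k := by
    by_contra h; push_neg at h; exact hne (funext h)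
  obtain ⟨n₀, hn₀⟩ := hA k₀
  have hrxnn : ∀ n, 0 ≤ rx n :=
    fun n => tsum_nonneg fun k => mul_nonneg (abs_nonneg _) (norm_nonneg _)
  have hrynn : ∀ n, 0 ≤ ry n :=
    fun n => tsum_nonneg fun k => mul_nonneg (abs_nonneg _) (norm_nonneg _)
  have hnorm_le : ∀ k, ‖y k‖ ≤ ‖x k‖ := by
    intro k
    refine HasSolidNorm.solid ?_
    rw [abs_of_nonneg (hy0 k), abs_of_nonneg ((hy0 k).trans (hyx k))]
    exact hyx k
  have hr_le : ∀ n, ry n ≤ rx n := fun n =>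
    Summable.tsum_le_tsum (fun k => mul_le_mul_of_nonneg_left (hnorm_le k) (abs_nonneg _))
      (hyS n) (hxS n)
  -- strict inequality of row sums at n₀
  have hsplit : ∀ k, ‖x k‖ = ‖y k‖ + ‖x k - y k‖ := by
    intro k
    have h := hAL (y k) (x k - y k) (hy0 k) (sub_nonneg.2 (hyx k))
    simpa using h
  have hgapS : Summable fun k => |a n₀ k| * ‖x k - y k‖ := by
    have heq : (fun k => |a n₀ k| * ‖x k - y k‖)
        = fun k => |a n₀ k| * ‖x k‖ - |a n₀ k| * ‖y k‖ := by
      funext k; rw [hsplit k]; ring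
    rw [heq]; exact (hxS n₀).sub (hyS n₀)
  have hgap_pos : 0 < |a n₀ k₀| * ‖x k₀ - y k₀‖ := by
    apply mul_pos (abs_pos.2 hn₀)
    rw [norm_pos_iff]
    exact sub_ne_zero.2 (Ne.symm hk₀)
  have hrx_split : rx n₀ = ry n₀ + ∑' k, |a n₀ k| * ‖x k - y k‖ := by
    rw [hrx, hry]; unfold rowSum
    rw [← Summable.tsum_add (hyS n₀) hgapS]
    congr 1; funext k; rw [hsplit k]; ring
  have hr_lt : ry n₀ < rx n₀ := by
    have hterm : |a n₀ k₀| * ‖x k₀ - y k₀‖ ≤ ∑' k, |a n₀ k| * ‖x k - y k‖ :=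
      Summable.le_tsum hgapS k₀ (fun k _ => mul_nonneg (abs_nonneg _) (norm_nonneg _))
    rw [hrx_split]; linarith
  have hrx0 : 0 < rx n₀ := (hrynn n₀).trans_lt hr_lt
  have hΦnn : ∀ (r : ℕ → ℝ), (∀ n, 0 ≤ r n) → ∀ s : ℝ, 0 < s → ∀ n, 0 ≤ Φ n (r n / s) :=
    fun r hr s hs n => (hΦ n).nonneg_s14 (div_nonneg (hr n) hs.le)
  set Sx := {σ : ℝ | 0 < σ ∧ (Summable fun n => Φ n (rx n / σ)) ∧
    (∑' n, Φ n (rx n / σ)) ≤ 1} with hSxdef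
  set Sy := {σ : ℝ | 0 < σ ∧ (Summable fun n => Φ n (ry n / σ)) ∧
    (∑' n, Φ n (ry n / σ)) ≤ 1} with hSydef
  -- Sx is nonempty
  have htends : Tendsto (fun σ : ℝ => ∑' n, Φ n (rx n / σ)) atTop (𝓝 0) := by
    have h0 : (0:ℝ) = ∑' _ : ℕ, (0:ℝ) := tsum_zero.symm
    rw [h0]
    apply tendsto_tsum_of_dominated_convergence (bound := fun n => Φ n (rx n / 1))
      (hxM 1 one_pos)
    · intro n
      have h1 : Tendsto (fun σ : ℝ => rx n / σ) atTop (𝓝 0) :=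
        tendsto_const_nhds.div_atTop tendsto_id
      have h1' : Tendsto (fun σ : ℝ => rx n / σ) atTop (𝓝[Set.Ici 0] 0) :=
        tendsto_nhdsWithin_iff.mpr ⟨h1, eventually_atTop.2
          ⟨1, fun σ hσ => div_nonneg (hrxnn n) (by linarith)⟩⟩
      have h2 := ((hΦ n).continuousOn 0 Set.self_mem_Ici).tendsto
      have h3 := h2.comp h1'
      rw [(hΦ n).map_zero] at h3; exact h3
    · filter_upwards [eventually_ge_atTop (1:ℝ)] with σ hσ
      intro n
      rw [Real.norm_eq_abs, abs_of_nonneg (hΦnn rx hrxnn σ (by linarith) n)]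
      apply (hΦ n).mono' (div_nonneg (hrxnn n) (by linarith))
      exact div_le_div_of_nonneg_left (hrxnn n) one_pos hσ
  have hSxne : Sx.Nonempty := by
    have hev : ∀ᶠ σ : ℝ in atTop, (∑' n, Φ n (rx n / σ)) < 1 :=
      htends.eventually_lt_const one_pos
    obtain ⟨σ₀, hσ₀, hσ₀'⟩ := (hev.and (eventually_ge_atTop (1:ℝ))).exists
    exact ⟨σ₀, by linarith, hxM σ₀ (by linarith), hσ₀.le⟩
  -- σ = sInf Sx is positive
  obtain ⟨t₀, ht₀⟩ := ((hΦ n₀).tendsto_atTop.eventually_gt_atTop 1).exists_forall_of_atTop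
  set t₁ : ℝ := max t₀ 1 with ht₁def
  have ht₁pos : (0:ℝ) < t₁ := lt_of_lt_of_le one_pos (le_max_right _ _)
  have hΦt₁ : 1 < Φ n₀ t₁ := ht₀ t₁ (le_max_left _ _)
  have hlb : ∀ s ∈ Sx, rx n₀ / t₁ ≤ s := by
    intro s hs
    obtain ⟨hspos, hssum, hsle⟩ := hs
    have hterm : Φ n₀ (rx n₀ / s) ≤ 1 :=
      le_trans (Summable.le_tsum hssum n₀ (fun m _ => hΦnn rx hrxnn s hspos m)) hsle
    have hlt : rx n₀ / s ≤ t₁ := by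
      by_contra hcon
      push_neg at hcon
      have := (hΦ n₀).mono' ht₁pos.le hcon.le
      linarith
    rw [div_le_iff₀ hspos] at hlt
    rw [div_le_iff₀ ht₁pos]
    linarith [hlt]
  set σ := sInf Sx with hσdef
  have hσ_lb : rx n₀ / t₁ ≤ σ := le_csInf hSxne hlb
  have σpos : 0 < σ := lt_of_lt_of_le (div_pos hrx0 ht₁pos) hσ_lb
  have hup : ∀ s : ℝ, σ < s → s ∈ Sx := by
    intro s hs
    obtain ⟨b, hb, hbs⟩ := exists_lt_of_csInf_lt hSxne hs
    have hbpos := hb.1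
    have hspos : 0 < s := hbpos.trans hbs
    refine ⟨hspos, hxM s hspos, ?_⟩
    refine le_trans (Summable.tsum_le_tsum (fun n => ?_) (hxM s hspos) hb.2.1) hb.2.2
    apply (hΦ n).mono' (div_nonneg (hrxnn n) hspos.le)
    exact div_le_div_of_nonneg_left (hrxnn n) hbpos hbs.le
  -- modular of x at σ is ≤ 1
  have hρx : (∑' n, Φ n (rx n / σ)) ≤ 1 := by
    have hpartial : ∀ N : ℕ, (∑ n ∈ Finset.range N, Φ n (rx n / σ)) ≤ 1 := by
      intro N
      have hc : Tendsto (fun s : ℝ => ∑ n ∈ Finset.range N, Φ n (rx n / s)) (𝓝 σ)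
          (𝓝 (∑ n ∈ Finset.range N, Φ n (rx n / σ))) := by
        apply tendsto_finset_sum
        intro n _
        show ContinuousAt (fun s : ℝ => Φ n (rx n / s)) σ
        rcases eq_or_lt_of_le (hrxnn n) with h0 | h0
        · have heq : (fun s : ℝ => Φ n (rx n / s)) = fun _ => Φ n 0 := by
            funext s; rw [← h0, zero_div]
          rw [heq]; exact continuousAt_const
        · have h1 : ContinuousAt (fun s : ℝ => rx n / s) σ :=
            continuousAt_const.div continuousAt_id σpos.ne'
          exact ((hΦ n).continuousOn.continuousAt
            (Ici_mem_nhds (div_pos h0 σpos))).comp h1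
      have htt : Tendsto (fun s : ℝ => ∑ n ∈ Finset.range N, Φ n (rx n / s)) (𝓝[>] σ)
          (𝓝 (∑ n ∈ Finset.range N, Φ n (rx n / σ))) :=
        hc.mono_left nhdsWithin_le_nhds
      refine le_of_tendsto htt ?_
      refine eventually_nhdsWithin_of_forall (fun s hs => ?_)
      have hmem := hup s hs
      exact le_trans (Summable.sum_le_tsum (Finset.range N)
        (fun n _ => hΦnn rx hrxnn s hmem.1 n) hmem.2.1) hmem.2.2
    refine Summable.tsum_le_of_sum_le (hxM σ σpos) (fun s => ?_)
    obtain ⟨N, hN⟩ := s.exists_nat_subset_range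
    exact le_trans (Finset.sum_le_sum_of_subset_of_nonneg hN
      (fun n _ _ => hΦnn rx hrxnn σ σpos n)) (hpartial N)
  -- the strict modular gap ε
  have hterm_lt : Φ n₀ (ry n₀ / σ) < Φ n₀ (rx n₀ / σ) :=
    (hΦ n₀).lt (div_nonneg (hrynn n₀) σpos.le)
      ((div_lt_div_iff_of_pos_right σpos).2 hr_lt)
  set ε := Φ n₀ (rx n₀ / σ) - Φ n₀ (ry n₀ / σ) with hεdef
  have hεpos : 0 < ε := by rw [hεdef]; linarith
  have hε1 : ε ≤ 1 := by
    have h1 : Φ n₀ (rx n₀ / σ) ≤ 1 :=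
      le_trans (Summable.le_tsum (hxM σ σpos) n₀ (fun m _ => hΦnn rx hrxnn σ σpos m)) hρx
    have h2 : 0 ≤ Φ n₀ (ry n₀ / σ) := hΦnn ry hrynn σ σpos n₀
    rw [hεdef]; linarith
  -- modular of y at σ is ≤ 1 - ε
  have hind : Summable (fun n : ℕ => if n = n₀ then ε else 0) := by
    apply summable_of_ne_finset_zero (s := {n₀})
    intro n hn
    simp only [Finset.mem_singleton] at hn
    simp [hn]
  have hρy : (∑' n, Φ n (ry n / σ)) + ε ≤ 1 := by
    have hmain : ∀ n, Φ n (ry n / σ) + (if n = n₀ then ε else 0) ≤ Φ n (rx n / σ) := by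
      intro n
      by_cases h : n = n₀
      · subst h
        rw [if_pos rfl, hεdef]
        ring_nf
        exact le_rfl
      · simp only [if_neg h, add_zero]
        apply (hΦ n).mono' (div_nonneg (hrynn n) σpos.le)
        gcongr
        exact hr_le n
    calc (∑' n, Φ n (ry n / σ)) + ε
        = ∑' n, (Φ n (ry n / σ) + (if n = n₀ then ε else 0)) := by
          rw [Summable.tsum_add (hyM σ σpos) hind, tsum_ite_eq]
      _ ≤ ∑' n, Φ n (rx n / σ) := Summable.tsum_le_tsum hmain ((hyM σ σpos).add hind) (hxM σ σpos)
      _ ≤ 1 := hρx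
  -- the 2-scaled modular of y
  have hSsum : Summable (fun n => Φ n (2 * (ry n / σ))) := by
    have h := hyM (σ / 2) (by positivity)
    have heq : (fun n => Φ n (ry n / (σ / 2))) = fun n => Φ n (2 * (ry n / σ)) := by
      funext n; congr 1
      rw [div_div_eq_mul_div]; ring
    rwa [heq] at h
  set S := ∑' n, Φ n (2 * (ry n / σ)) with hSdef
  have hSnn : 0 ≤ S :=
    tsum_nonneg (fun n => (hΦ n).nonneg_s14 (mul_nonneg (by norm_num)
      (div_nonneg (hrynn n) σpos.le)))
  set δ := min 1 (ε / (2 * (S + 1))) with hδdef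
  have hδpos : 0 < δ := lt_min one_pos (by positivity)
  have hδ1 : δ ≤ 1 := min_le_left _ _
  have hδS : δ * (S + 1) ≤ ε / 2 := by
    have h1 : δ ≤ ε / (2 * (S + 1)) := min_le_right _ _
    have h2 : (0:ℝ) < S + 1 := by linarith
    calc δ * (S + 1) ≤ ε / (2 * (S + 1)) * (S + 1) :=
          mul_le_mul_of_nonneg_right h1 h2.le
      _ = ε / 2 := by field_simp
  set σ' := σ / (1 + δ) with hσ'def
  have hσ'pos : 0 < σ' := div_pos σpos (by linarith)
  have hmemy : σ' ∈ Sy := by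
    refine ⟨hσ'pos, hyM σ' hσ'pos, ?_⟩
    have heq : ∀ n, ry n / σ' = (1 + δ) * (ry n / σ) := by
      intro n; rw [hσ'def, div_div_eq_mul_div]; ring
    have hle : ∀ n, Φ n (ry n / σ') ≤ (1 - δ) * Φ n (ry n / σ) + δ * Φ n (2 * (ry n / σ)) := by
      intro n; rw [heq n]
      exact (hΦ n).combo (div_nonneg (hrynn n) σpos.le) hδpos.le hδ1
    have hsum2 : Summable (fun n => (1 - δ) * Φ n (ry n / σ) + δ * Φ n (2 * (ry n / σ))) :=
      ((hyM σ σpos).mul_left _).add (hSsum.mul_left _)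
    have hkey := Summable.tsum_le_tsum hle (hyM σ' hσ'pos) hsum2
    rw [Summable.tsum_add ((hyM σ σpos).mul_left _) (hSsum.mul_left _), tsum_mul_left,
      tsum_mul_left] at hkey
    have hρynn : 0 ≤ ∑' n, Φ n (ry n / σ) := tsum_nonneg (hΦnn ry hrynn σ σpos)
    have hρy' : (∑' n, Φ n (ry n / σ)) ≤ 1 - ε := by linarith
    nlinarith [hkey, hδS, hεpos, hε1, hδpos, hδ1, hSnn, hρynn,
      mul_nonneg (sub_nonneg.2 hδ1) (sub_nonneg.2 hρy'),
      mul_nonneg hδpos.le (sub_nonneg.2 hε1)]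
  calc sInf Sy ≤ σ' := csInf_le ⟨0, fun s hs => hs.1.le⟩ hmemy
    _ < σ := div_lt_self σpos (by linarith)
end

section
/- Let A be a triangle matrix (a_{nn} ≠ 0 for all n and a_{nk} = 0 for k > n) and X a Banach lattice. Then every x̄ ∈ h_Φ^A(X) is order continuous in the following sense: for every sequence (x̄^{(m)}) in h_Φ^A(X) with 0 ≤ x̄^{(m)} ≤ |x̄| coordinatewise for all m and with x_k^{(m)} → 0 in X for each k as m → ∞, one has ρ_Φ^A(t x̄^{(m)}) → 0 for every t > 0, and consequently ‖x̄^{(m)}‖_Φ^A → 0. -/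
open Filter Topology

/-- for a triangle matrix `A` and a Banach lattice `X`, every
element of `h_Φ^A(X)` is order continuous. -/
theorem hPhiA_order_continuous
    {X : Type*} [NormedAddCommGroup X] [Lattice X] [IsOrderedAddMonoid X] [HasSolidNorm X]
    [NormedSpace ℝ X] [CompleteSpace X]
    (Φ : ℕ → ℝ → ℝ) (hΦ : IsMusielakOrlicz Φ)
    (a : ℕ → ℕ → ℝ) (hA : IsTriangle a)
    (x : ℕ → X) (hx : MemH Φ a x)
    (F : ℕ → ℕ → X) (hF : ∀ m, MemH Φ a (F m))
    (hpos : ∀ m k, 0 ≤ F m k) (hle : ∀ m k, F m k ≤ |x k|)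
    (hconv : ∀ k, Tendsto (fun m => F m k) atTop (𝓝 (0 : X))) :
    (∀ t > (0 : ℝ), Tendsto (fun m => rhoA Φ a (t • F m)) atTop (𝓝 0)) ∧
    Tendsto (fun m => ANorm Φ a (F m)) atTop (𝓝 0) := by
  obtain ⟨hdiag, htri⟩ := hA
  have hΦnonneg : ∀ n s, 0 ≤ s → 0 ≤ Φ n s := fun n s hs =>
    (hΦ n).map_zero ▸ (hΦ n).monotoneOn Set.self_mem_Ici hs hs
  have hrs_nonneg : ∀ (y : ℕ → X) n, 0 ≤ rowSum a y n := fun y n =>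
    tsum_nonneg fun k => mul_nonneg (abs_nonneg _) (norm_nonneg _)
  have hnormle : ∀ m k, ‖F m k‖ ≤ ‖x k‖ := by
    intro m k
    apply norm_le_norm_of_abs_le_abs
    rw [abs_of_nonneg (hpos m k)]
    exact hle m k
  have hFle : ∀ m n, rowSum a (F m) n ≤ rowSum a x n := fun m n =>
    Summable.tsum_le_tsum (fun k => mul_le_mul_of_nonneg_left (hnormle m k) (abs_nonneg _))
      ((hF m).2.1 n) (hx.2.1 n)
  have hsmul : ∀ (c : ℝ) (y : ℕ → X) n, rowSum a (c • y) n = |c| * rowSum a y n := by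
    intro c y n
    simp only [rowSum, Pi.smul_apply, norm_smul, Real.norm_eq_abs]
    rw [← tsum_mul_left]
    apply tsum_congr
    intro k; ring
  have hrow_tendsto : ∀ n, Tendsto (fun m => rowSum a (F m) n) atTop (𝓝 0) := by
    intro n
    have heq : ∀ m, rowSum a (F m) n = ∑ k ∈ Finset.range (n+1), |a n k| * ‖F m k‖ := by
      intro m
      apply tsum_eq_sum
      intro k hk
      have hnk : n < k := by
        by_contra h
        exact hk (Finset.mem_range.mpr (Nat.lt_succ_of_le (not_lt.mp h)))
      rw [htri n k hnk, abs_zero, zero_mul]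
    simp only [heq]
    have h0 : (0:ℝ) = ∑ k ∈ Finset.range (n+1), (0:ℝ) := by simp
    rw [h0]
    apply tendsto_finset_sum
    intro k _
    have := (hconv k).norm
    simpa using this.const_mul |a n k|
  have part1 : ∀ t > (0 : ℝ), Tendsto (fun m => rhoA Φ a (t • F m)) atTop (𝓝 0) := by
    intro t ht
    have hbound_sum : Summable (fun n => Φ n (t * rowSum a x n)) := by
      have := hx.2.2 t⁻¹ (by positivity)
      simpa [div_eq_mul_inv, inv_inv, mul_comm] using this
    have hconvp : ∀ n, Tendsto (fun m => Φ n (rowSum a (t • F m) n)) atTop (𝓝 0) := by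
      intro n
      have h1 : Tendsto (fun m => rowSum a (t • F m) n) atTop (𝓝 0) := by
        simp only [hsmul]
        simpa using (hrow_tendsto n).const_mul |t|
      have hc : ContinuousWithinAt (Φ n) (Set.Ici 0) 0 :=
        (hΦ n).continuousOn 0 Set.self_mem_Ici
      have h2 : Tendsto (fun m => Φ n (rowSum a (t • F m) n)) atTop (𝓝 (Φ n 0)) := by
        apply hc.tendsto.comp
        rw [tendsto_nhdsWithin_iff]
        exact ⟨h1, Filter.Eventually.of_forall fun m => hrs_nonneg _ n⟩
      simpa [(hΦ n).map_zero] using h2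
    have hbd : ∀ᶠ m in atTop, ∀ n, ‖Φ n (rowSum a (t • F m) n)‖ ≤ Φ n (t * rowSum a x n) := by
      apply Filter.Eventually.of_forall
      intro m n
      have h1 : rowSum a (t • F m) n = t * rowSum a (F m) n := by
        rw [hsmul, abs_of_pos ht]
      have h2 : t * rowSum a (F m) n ≤ t * rowSum a x n :=
        mul_le_mul_of_nonneg_left (hFle m n) ht.le
      rw [Real.norm_eq_abs, abs_of_nonneg (hΦnonneg n _ (hrs_nonneg _ n)), h1]
      exact (hΦ n).monotoneOn (mul_nonneg ht.le (hrs_nonneg _ n))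
        (mul_nonneg ht.le (hrs_nonneg _ n)) h2
    have := tendsto_tsum_of_dominated_convergence (𝓕 := atTop)
      (f := fun m n => Φ n (rowSum a (t • F m) n)) (g := fun _ => 0)
      hbound_sum hconvp hbd
    simpa [rhoA] using this
  refine ⟨part1, ?_⟩
  rw [Metric.tendsto_atTop]
  intro ε hε
  have ht : (0:ℝ) < 2/ε := by positivity
  have hev : ∀ᶠ m in atTop, rhoA Φ a ((2/ε) • F m) < 1 :=
    (part1 (2/ε) ht).eventually_lt_const one_pos
  obtain ⟨N, hN⟩ := Filter.eventually_atTop.mp hev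
  refine ⟨N, fun m hm => ?_⟩
  have hmem : (ε/2) ∈ {σ : ℝ | 0 < σ ∧ (Summable fun n => Φ n (rowSum a (F m) n / σ)) ∧
      (∑' n, Φ n (rowSum a (F m) n / σ)) ≤ 1} := by
    refine ⟨by positivity, (hF m).2.2 (ε/2) (by positivity), ?_⟩
    have heq : ∀ n, rowSum a (F m) n / (ε/2) = rowSum a ((2/ε) • F m) n := by
      intro n
      rw [hsmul, abs_of_pos ht]
      field_simp
    calc (∑' n, Φ n (rowSum a (F m) n / (ε/2)))
        = rhoA Φ a ((2/ε) • F m) := tsum_congr fun n => by rw [heq n]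
      _ ≤ 1 := (hN m hm).le
  have h1 : ANorm Φ a (F m) ≤ ε/2 :=
    csInf_le ⟨0, fun σ hσ => hσ.1.le⟩ hmem
  have h2 : 0 ≤ ANorm Φ a (F m) :=
    Real.sInf_nonneg fun σ hσ => hσ.1.le
  rw [Real.dist_eq, sub_zero, abs_of_nonneg h2]
  linarith
end

section
/- Let A ∈ 𝒜 satisfy condition (♦) with constant M, and fix an s-number sequence s and Banach spaces E, F. Then L_Φ^A(E,F) is a linear subspace of L(E,F); ‖·‖_Φ^A is a quasi-norm on L_Φ^A(E,F) (‖T‖_Φ^A = 0 iff T = 0, ‖αT‖_Φ^A = |α| ‖T‖_Φ^A, and ‖S+T‖_Φ^A ≤ M'(‖S‖_Φ^A + ‖T‖_Φ^A) where M' = max(M,1)); L_Φ^A(E,F) is complete under ‖·‖_Φ^A; and there exists a constant C > 0 such that ‖T‖ ≤ C ‖T‖_Φ^A for all T ∈ L_Φ^A(E,F), so the inclusion of (L_Φ^A(E,F), ‖·‖_Φ^A) into (L(E,F), ‖·‖) is continuous. -/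
open Filter Topology

/-- Condition (♦) on the matrix `A` with constant `M` (`0`-indexed version of
`|a_{n,2k-1}| + |a_{n,2k}| ≤ M |a_{n,k}|`). -/
def CondDiamond (a : ℕ → ℕ → ℝ) (M : ℝ) : Prop :=
  ∀ n k : ℕ, |a n (2 * k)| + |a n (2 * k + 1)| ≤ M * |a n k|

/-- An `s`-number sequence in the sense of Pietsch (indexed from `0`, so that
`s T 0` is the paper's `s₁(T)`). -/
structure SNumberSeq : Type 1 where
  s : ∀ (E F : Type) [NormedAddCommGroup E] [NormedSpace ℝ E] [CompleteSpace E]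
      [NormedAddCommGroup F] [NormedSpace ℝ F] [CompleteSpace F],
      (E →L[ℝ] F) → ℕ → ℝ
  nonneg : ∀ (E F : Type) [NormedAddCommGroup E] [NormedSpace ℝ E] [CompleteSpace E]
      [NormedAddCommGroup F] [NormedSpace ℝ F] [CompleteSpace F]
      (T : E →L[ℝ] F) (n : ℕ), 0 ≤ s E F T n
  norm_eq : ∀ (E F : Type) [NormedAddCommGroup E] [NormedSpace ℝ E] [CompleteSpace E]
      [NormedAddCommGroup F] [NormedSpace ℝ F] [CompleteSpace F]
      (T : E →L[ℝ] F), s E F T 0 = ‖T‖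
  antitone : ∀ (E F : Type) [NormedAddCommGroup E] [NormedSpace ℝ E] [CompleteSpace E]
      [NormedAddCommGroup F] [NormedSpace ℝ F] [CompleteSpace F]
      (T : E →L[ℝ] F), Antitone (s E F T)
  additive : ∀ (E F : Type) [NormedAddCommGroup E] [NormedSpace ℝ E] [CompleteSpace E]
      [NormedAddCommGroup F] [NormedSpace ℝ F] [CompleteSpace F]
      (S T : E →L[ℝ] F) (m n : ℕ), s E F (S + T) (m + n) ≤ s E F S m + s E F T n
  ideal : ∀ (E F E₀ F₀ : Type)
      [NormedAddCommGroup E] [NormedSpace ℝ E] [CompleteSpace E]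
      [NormedAddCommGroup F] [NormedSpace ℝ F] [CompleteSpace F]
      [NormedAddCommGroup E₀] [NormedSpace ℝ E₀] [CompleteSpace E₀]
      [NormedAddCommGroup F₀] [NormedSpace ℝ F₀] [CompleteSpace F₀]
      (R : F →L[ℝ] F₀) (S : E →L[ℝ] F) (T : E₀ →L[ℝ] E) (n : ℕ),
      s E₀ F₀ ((R.comp S).comp T) n ≤ ‖R‖ * s E F S n * ‖T‖
  rank : ∀ (E F : Type) [NormedAddCommGroup E] [NormedSpace ℝ E] [CompleteSpace E]
      [NormedAddCommGroup F] [NormedSpace ℝ F] [CompleteSpace F]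
      (T : E →L[ℝ] F) (n : ℕ),
      Module.rank ℝ ↥(LinearMap.range (T : E →ₗ[ℝ] F)) ≤ (n : Cardinal) → s E F T n = 0
  norming : ∀ n : ℕ,
      s (EuclideanSpace ℝ (Fin (n + 1))) (EuclideanSpace ℝ (Fin (n + 1)))
        (ContinuousLinearMap.id ℝ (EuclideanSpace ℝ (Fin (n + 1)))) n = 1

/-- Membership of a scalar sequence `t = (s_k(T))` in `l_Φ^A`:
row sums `∑_k |a_{nk}| t_k` are finite and `∑_n φ_n(row_n/σ) < ∞` for some `σ > 0`. -/
def OpMemL (Φ : ℕ → ℝ → ℝ) (a : ℕ → ℕ → ℝ) (t : ℕ → ℝ) : Prop :=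
  (∀ n, Summable fun k => |a n k| * t k) ∧
    ∃ σ > (0 : ℝ), Summable fun n => Φ n ((∑' k, |a n k| * t k) / σ)

/-- Membership in `h_Φ^A`: as `OpMemL` but for every `σ > 0`. -/
def OpMemH (Φ : ℕ → ℝ → ℝ) (a : ℕ → ℕ → ℝ) (t : ℕ → ℝ) : Prop :=
  (∀ n, Summable fun k => |a n k| * t k) ∧
    ∀ σ > (0 : ℝ), Summable fun n => Φ n ((∑' k, |a n k| * t k) / σ)

/-- The quasi-norm `‖T‖_Φ^A` evaluated on the sequence `t = (s_k(T))`. -/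
noncomputable def OpANorm (Φ : ℕ → ℝ → ℝ) (a : ℕ → ℕ → ℝ) (t : ℕ → ℝ) : ℝ :=
  sInf {σ : ℝ | 0 < σ ∧ (Summable fun n => Φ n ((∑' k, |a n k| * t k) / σ)) ∧
    (∑' n, Φ n ((∑' k, |a n k| * t k) / σ)) ≤ 1}

section Aux

lemma orlicz_nonneg {φ : ℝ → ℝ} (h : IsOrliczFn φ) {x : ℝ} (hx : 0 ≤ x) : 0 ≤ φ x :=
  h.map_zero ▸ h.monotoneOn Set.self_mem_Ici hx hx

lemma orlicz_mono {φ : ℝ → ℝ} (h : IsOrliczFn φ) {x y : ℝ} (hx : 0 ≤ x) (hxy : x ≤ y) :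
    φ x ≤ φ y := h.monotoneOn hx (hx.trans hxy) hxy

lemma orlicz_mul_le {φ : ℝ → ℝ} (h : IsOrliczFn φ) {c x : ℝ} (hc : 0 ≤ c) (hc1 : c ≤ 1)
    (hx : 0 ≤ x) : φ (c * x) ≤ c * φ x := by
  have := h.convexOn.2 (Set.mem_Ici.2 hx) (Set.self_mem_Ici) hc (by linarith : (0:ℝ) ≤ 1 - c)
    (by ring)
  simpa [smul_eq_mul, h.map_zero] using this

lemma orlicz_convex_div {φ : ℝ → ℝ} (h : IsOrliczFn φ) {x y σ τ : ℝ} (hx : 0 ≤ x) (hy : 0 ≤ y)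
    (hσ : 0 < σ) (hτ : 0 < τ) :
    φ ((x + y) / (σ + τ)) ≤ σ / (σ + τ) * φ (x / σ) + τ / (σ + τ) * φ (y / τ) := by
  have hst : 0 < σ + τ := by linarith
  have h1 : (0:ℝ) ≤ σ / (σ + τ) := by positivity
  have h2 : (0:ℝ) ≤ τ / (σ + τ) := by positivity
  have h3 : σ / (σ + τ) + τ / (σ + τ) = 1 := by field_simp
  have := h.convexOn.2 (Set.mem_Ici.2 (by positivity : (0:ℝ) ≤ x / σ))
    (Set.mem_Ici.2 (by positivity : (0:ℝ) ≤ y / τ)) h1 h2 h3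
  simp only [smul_eq_mul] at this
  have heq : σ / (σ + τ) * (x / σ) + τ / (σ + τ) * (y / τ) = (x + y) / (σ + τ) := by
    rw [div_mul_div_comm, div_mul_div_comm, mul_comm σ x, mul_comm τ y,
      mul_div_mul_right _ _ hσ.ne', mul_div_mul_right _ _ hτ.ne', ← add_div]
  rwa [heq] at this

lemma orlicz_one_lt {φ : ℝ → ℝ} (h : IsOrliczFn φ) :
    ∃ B > (0:ℝ), ∀ x : ℝ, 0 ≤ x → φ x ≤ 1 → x ≤ B := by
  obtain ⟨x₀, hx₀⟩ := (h.tendsto_atTop.eventually_ge_atTop 2).exists_forall_of_atTop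
  refine ⟨max x₀ 1, lt_max_of_lt_right one_pos, fun x hx hφx => ?_⟩
  by_contra hB
  push_neg at hB
  have : x₀ ≤ x := le_trans (le_max_left _ _) hB.le
  have := hx₀ x this
  linarith

end Aux
section Aux2

/-- Row sums of the matrix against a sequence. -/
noncomputable def OpRow (a : ℕ → ℕ → ℝ) (t : ℕ → ℝ) (n : ℕ) : ℝ := ∑' k, |a n k| * t k

/-- The admissible set whose infimum is `OpANorm`. -/
def OpAdm (Φ : ℕ → ℝ → ℝ) (a : ℕ → ℕ → ℝ) (t : ℕ → ℝ) : Set ℝ :=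
  {σ : ℝ | 0 < σ ∧ (Summable fun n => Φ n ((∑' k, |a n k| * t k) / σ)) ∧
    (∑' n, Φ n ((∑' k, |a n k| * t k) / σ)) ≤ 1}

lemma opANorm_eq (Φ : ℕ → ℝ → ℝ) (a : ℕ → ℕ → ℝ) (t : ℕ → ℝ) :
    OpANorm Φ a t = sInf (OpAdm Φ a t) := rfl

lemma opAdm_mem_iff {Φ : ℕ → ℝ → ℝ} {a : ℕ → ℕ → ℝ} {t : ℕ → ℝ} {σ : ℝ} :
    σ ∈ OpAdm Φ a t ↔ 0 < σ ∧ (Summable fun n => Φ n (OpRow a t n / σ)) ∧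
      (∑' n, Φ n (OpRow a t n / σ)) ≤ 1 := Iff.rfl

lemma opRow_nonneg {a : ℕ → ℕ → ℝ} {t : ℕ → ℝ} (ht : ∀ k, 0 ≤ t k) (n : ℕ) :
    0 ≤ OpRow a t n :=
  tsum_nonneg fun k => mul_nonneg (abs_nonneg _) (ht k)

lemma opRow_bddBelow {Φ : ℕ → ℝ → ℝ} {a : ℕ → ℕ → ℝ} {t : ℕ → ℝ} :
    BddBelow (OpAdm Φ a t) := ⟨0, fun _ hx => hx.1.le⟩

lemma opANorm_nonneg (Φ : ℕ → ℝ → ℝ) (a : ℕ → ℕ → ℝ) (t : ℕ → ℝ) : 0 ≤ OpANorm Φ a t :=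
  Real.sInf_nonneg fun _ hx => hx.1.le

lemma opANorm_le_of_mem {Φ : ℕ → ℝ → ℝ} {a : ℕ → ℕ → ℝ} {t : ℕ → ℝ} {σ : ℝ}
    (hσ : σ ∈ OpAdm Φ a t) : OpANorm Φ a t ≤ σ := csInf_le opRow_bddBelow hσ

lemma first_le_opRow {a : ℕ → ℕ → ℝ} {t : ℕ → ℝ} (ht : ∀ k, 0 ≤ t k) {n : ℕ}
    (hs : Summable fun k => |a n k| * t k) : |a n 0| * t 0 ≤ OpRow a t n :=
  Summable.le_tsum hs 0 fun k _ => mul_nonneg (abs_nonneg _) (ht k)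

/-- Monotonicity of the admissible set. -/
lemma opAdm_mono {Φ : ℕ → ℝ → ℝ} {a : ℕ → ℕ → ℝ} {t : ℕ → ℝ} (hΦ : IsMusielakOrlicz Φ)
    (ht : ∀ k, 0 ≤ t k) {σ τ : ℝ} (hσ : σ ∈ OpAdm Φ a t) (hστ : σ ≤ τ) :
    τ ∈ OpAdm Φ a t := by
  obtain ⟨hσ0, hsum, hle⟩ := hσ
  have hτ0 : 0 < τ := lt_of_lt_of_le hσ0 hστ
  have key : ∀ n, Φ n (OpRow a t n / τ) ≤ Φ n (OpRow a t n / σ) := fun n =>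
    orlicz_mono (hΦ n) (div_nonneg (opRow_nonneg ht n) hτ0.le)
      (div_le_div_of_nonneg_left (opRow_nonneg ht n) hσ0 hστ)
  have hnonneg : ∀ n, 0 ≤ Φ n (OpRow a t n / τ) := fun n =>
    orlicz_nonneg (hΦ n) (div_nonneg (opRow_nonneg ht n) hτ0.le)
  have hsum' : Summable fun n => Φ n (OpRow a t n / τ) :=
    Summable.of_nonneg_of_le hnonneg key hsum
  exact ⟨hτ0, hsum', le_trans (Summable.tsum_le_tsum key hsum' hsum) hle⟩

/-- The admissible set is nonempty for members of `L_Φ^A`. -/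
lemma opAdm_nonempty {Φ : ℕ → ℝ → ℝ} {a : ℕ → ℕ → ℝ} {t : ℕ → ℝ} (hΦ : IsMusielakOrlicz Φ)
    (ht : ∀ k, 0 ≤ t k) (hmem : OpMemL Φ a t) : (OpAdm Φ a t).Nonempty := by
  obtain ⟨-, σ₀, hσ₀, hsum⟩ := hmem
  set S₀ : ℝ := ∑' n, Φ n (OpRow a t n / σ₀) with hS₀
  have hSnn : 0 ≤ S₀ := tsum_nonneg fun n =>
    orlicz_nonneg (hΦ n) (div_nonneg (opRow_nonneg ht n) hσ₀.le)
  set c : ℝ := max S₀ 1 with hc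
  have hc1 : (1:ℝ) ≤ c := le_max_right _ _
  have hc0 : (0:ℝ) < c := lt_of_lt_of_le one_pos hc1
  refine ⟨σ₀ * c, mul_pos hσ₀ hc0, ?_, ?_⟩ <;>
  · have key : ∀ n, Φ n (OpRow a t n / (σ₀ * c)) ≤ c⁻¹ * Φ n (OpRow a t n / σ₀) := by
      intro n
      have : OpRow a t n / (σ₀ * c) = c⁻¹ * (OpRow a t n / σ₀) := by
        rw [← div_div, div_eq_inv_mul]
      rw [this]
      exact orlicz_mul_le (hΦ n) (by positivity) (inv_le_one_of_one_le₀ hc1)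
        (div_nonneg (opRow_nonneg ht n) hσ₀.le)
    have hnn : ∀ n, 0 ≤ Φ n (OpRow a t n / (σ₀ * c)) := fun n =>
      orlicz_nonneg (hΦ n) (div_nonneg (opRow_nonneg ht n) (by positivity))
    have hsum' : Summable fun n => Φ n (OpRow a t n / (σ₀ * c)) :=
      Summable.of_nonneg_of_le hnn key (hsum.mul_left _)
    first
    | exact hsum'
    | calc (∑' n, Φ n (OpRow a t n / (σ₀ * c)))
          ≤ ∑' n, c⁻¹ * Φ n (OpRow a t n / σ₀) := Summable.tsum_le_tsum key hsum' (hsum.mul_left _)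
        _ = c⁻¹ * S₀ := by rw [tsum_mul_left]
        _ ≤ 1 := by
            rw [inv_mul_le_iff₀ hc0, mul_one]
            exact le_max_left _ _

end Aux2
section Aux3

/-- Pairing/diamond estimate on rows. -/
lemma opRow_pair {a : ℕ → ℕ → ℝ} {M : ℝ} (hD : CondDiamond a M) {t v : ℕ → ℝ}
    (ht : ∀ k, 0 ≤ t k) (hv : ∀ k, 0 ≤ v k)
    (h2 : ∀ k, v (2 * k) ≤ t k) (h2' : ∀ k, v (2 * k + 1) ≤ t k) (n : ℕ)
    (hsum : Summable fun k => |a n k| * t k) :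
    (Summable fun k => |a n k| * v k) ∧ OpRow a v n ≤ M * OpRow a t n := by
  set f : ℕ → ℝ := fun k => |a n k| * v k with hf
  have hfnn : ∀ k, 0 ≤ f k := fun k => mul_nonneg (abs_nonneg _) (hv k)
  have hkey : ∀ k, f (2 * k) + f (2 * k + 1) ≤ M * (|a n k| * t k) := by
    intro k
    have : f (2 * k) + f (2 * k + 1) ≤ (|a n (2 * k)| + |a n (2 * k + 1)|) * t k := by
      rw [add_mul]
      exact add_le_add (mul_le_mul_of_nonneg_left (h2 k) (abs_nonneg _))
        (mul_le_mul_of_nonneg_left (h2' k) (abs_nonneg _))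
    refine this.trans ?_
    rw [← mul_assoc]
    exact mul_le_mul_of_nonneg_right (hD n k) (ht k)
  have he : Summable fun k => f (2 * k) :=
    Summable.of_nonneg_of_le (fun k => hfnn _)
      (fun k => le_trans (le_add_of_nonneg_right (hfnn _)) (hkey k)) (hsum.mul_left M)
  have ho : Summable fun k => f (2 * k + 1) :=
    Summable.of_nonneg_of_le (fun k => hfnn _)
      (fun k => le_trans (le_add_of_nonneg_left (hfnn _)) (hkey k)) (hsum.mul_left M)
  refine ⟨he.even_add_odd ho, ?_⟩
  have hsplit : OpRow a v n = ∑' k, f (2 * k) + ∑' k, f (2 * k + 1) :=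
    (tsum_even_add_odd he ho).symm
  rw [hsplit, ← Summable.tsum_add he ho]
  calc (∑' k, (f (2 * k) + f (2 * k + 1))) ≤ ∑' k, M * (|a n k| * t k) :=
        Summable.tsum_le_tsum hkey (he.add ho) (hsum.mul_left M)
    _ = M * OpRow a t n := tsum_mul_left

/-- Uniform lower bound: `t 0 ≤ C⁻¹·σ`-style estimate giving continuity of inclusion. -/
lemma opANorm_lower {Φ : ℕ → ℝ → ℝ} {a : ℕ → ℕ → ℝ} (hΦ : IsMusielakOrlicz Φ)
    (hA : MatrixClassA a) :
    ∃ C > (0:ℝ), ∀ t : ℕ → ℝ, (∀ k, 0 ≤ t k) → (∀ n, Summable fun k => |a n k| * t k) →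
      ∀ σ ∈ OpAdm Φ a t, t 0 ≤ C * σ := by
  obtain ⟨n₀, ha0⟩ := hA 0
  have ha0' : 0 < |a n₀ 0| := abs_pos.2 ha0
  obtain ⟨B, hB, hBle⟩ := orlicz_one_lt (hΦ n₀)
  refine ⟨B / |a n₀ 0|, by positivity, fun t ht hrow σ hσ => ?_⟩
  obtain ⟨hσ0, hsum, hle⟩ := hσ
  have h1 : Φ n₀ (OpRow a t n₀ / σ) ≤ 1 :=
    le_trans (Summable.le_tsum hsum n₀ fun n _ =>
      orlicz_nonneg (hΦ n) (div_nonneg (opRow_nonneg ht n) hσ0.le)) hle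
  have h2 : OpRow a t n₀ / σ ≤ B :=
    hBle _ (div_nonneg (opRow_nonneg ht n₀) hσ0.le) h1
  have h3 : OpRow a t n₀ ≤ B * σ := by
    rwa [div_le_iff₀ hσ0] at h2
  have h4 : |a n₀ 0| * t 0 ≤ B * σ := le_trans (first_le_opRow ht (hrow n₀)) h3
  rw [div_mul_eq_mul_div, le_div_iff₀ ha0']
  linarith [h4]

end Aux3
section Aux4

lemma opPair_sigma {Φ : ℕ → ℝ → ℝ} {a : ℕ → ℕ → ℝ} {M : ℝ} (hΦ : IsMusielakOrlicz Φ)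
    (hM : 0 < M) (hD : CondDiamond a M) {t u v : ℕ → ℝ}
    (ht : ∀ k, 0 ≤ t k) (hu : ∀ k, 0 ≤ u k) (hv : ∀ k, 0 ≤ v k)
    (h2 : ∀ k, v (2 * k) ≤ t k + u k) (h2' : ∀ k, v (2 * k + 1) ≤ t k + u k)
    (hrt : ∀ n, Summable fun k => |a n k| * t k) (hru : ∀ n, Summable fun k => |a n k| * u k)
    {σt σu : ℝ} (hσt : 0 < σt) (hσu : 0 < σu)
    (hsumt : Summable fun n => Φ n (OpRow a t n / σt))
    (hsumu : Summable fun n => Φ n (OpRow a u n / σu)) :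
    (∀ n, Summable fun k => |a n k| * v k) ∧
    (Summable fun n => Φ n (OpRow a v n / (M * (σt + σu)))) ∧
    (∑' n, Φ n (OpRow a v n / (M * (σt + σu)))) ≤
      σt / (σt + σu) * (∑' n, Φ n (OpRow a t n / σt)) +
      σu / (σt + σu) * (∑' n, Φ n (OpRow a u n / σu)) := by
  have htu : ∀ k, 0 ≤ t k + u k := fun k => add_nonneg (ht k) (hu k)
  have hrtu : ∀ n, Summable fun k => |a n k| * (t k + u k) := by
    intro n
    simpa [mul_add] using (hrt n).add (hru n)
  have hpair := fun n => opRow_pair hD htu hv h2 h2' n (hrtu n)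
  have hrowtu : ∀ n, OpRow a (fun k => t k + u k) n = OpRow a t n + OpRow a u n := by
    intro n
    simp only [OpRow, mul_add]
    exact Summable.tsum_add (hrt n) (hru n)
  have hστ : 0 < σt + σu := by linarith
  have hMστ : 0 < M * (σt + σu) := by positivity
  have key : ∀ n, Φ n (OpRow a v n / (M * (σt + σu))) ≤
      σt / (σt + σu) * Φ n (OpRow a t n / σt) + σu / (σt + σu) * Φ n (OpRow a u n / σu) := by
    intro n
    have h1 : OpRow a v n / (M * (σt + σu)) ≤ (OpRow a t n + OpRow a u n) / (σt + σu) := by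
      rw [div_le_div_iff₀ hMστ hστ]
      calc OpRow a v n * (σt + σu) ≤ M * OpRow a (fun k => t k + u k) n * (σt + σu) :=
            mul_le_mul_of_nonneg_right (hpair n).2 hστ.le
        _ = (OpRow a t n + OpRow a u n) * (M * (σt + σu)) := by rw [hrowtu n]; ring
    refine le_trans (orlicz_mono (hΦ n)
      (div_nonneg (opRow_nonneg hv n) hMστ.le) h1) ?_
    exact orlicz_convex_div (hΦ n) (opRow_nonneg ht n) (opRow_nonneg hu n) hσt hσu
  have hnn : ∀ n, 0 ≤ Φ n (OpRow a v n / (M * (σt + σu))) := fun n =>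
    orlicz_nonneg (hΦ n) (div_nonneg (opRow_nonneg hv n) hMστ.le)
  have hsumc : Summable fun n =>
      σt / (σt + σu) * Φ n (OpRow a t n / σt) + σu / (σt + σu) * Φ n (OpRow a u n / σu) :=
    (hsumt.mul_left _).add (hsumu.mul_left _)
  have hsv : Summable fun n => Φ n (OpRow a v n / (M * (σt + σu))) :=
    Summable.of_nonneg_of_le hnn key hsumc
  refine ⟨fun n => (hpair n).1, hsv, ?_⟩
  calc (∑' n, Φ n (OpRow a v n / (M * (σt + σu))))
      ≤ ∑' n, (σt / (σt + σu) * Φ n (OpRow a t n / σt) +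
          σu / (σt + σu) * Φ n (OpRow a u n / σu)) := Summable.tsum_le_tsum key hsv hsumc
    _ = σt / (σt + σu) * (∑' n, Φ n (OpRow a t n / σt)) +
        σu / (σt + σu) * (∑' n, Φ n (OpRow a u n / σu)) := by
        rw [Summable.tsum_add (hsumt.mul_left _) (hsumu.mul_left _), tsum_mul_left, tsum_mul_left]

lemma opMemL_pair {Φ : ℕ → ℝ → ℝ} {a : ℕ → ℕ → ℝ} {M : ℝ} (hΦ : IsMusielakOrlicz Φ)
    (hM : 0 < M) (hD : CondDiamond a M) {t u v : ℕ → ℝ}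
    (ht : ∀ k, 0 ≤ t k) (hu : ∀ k, 0 ≤ u k) (hv : ∀ k, 0 ≤ v k)
    (h2 : ∀ k, v (2 * k) ≤ t k + u k) (h2' : ∀ k, v (2 * k + 1) ≤ t k + u k)
    (hmt : OpMemL Φ a t) (hmu : OpMemL Φ a u) : OpMemL Φ a v := by
  obtain ⟨hrt, σt, hσt, hsumt⟩ := hmt
  obtain ⟨hru, σu, hσu, hsumu⟩ := hmu
  obtain ⟨h1, h2'', -⟩ := opPair_sigma hΦ hM hD ht hu hv h2 h2' hrt hru hσt hσu hsumt hsumu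
  exact ⟨h1, M * (σt + σu), by positivity, h2''⟩

lemma opAdm_pair {Φ : ℕ → ℝ → ℝ} {a : ℕ → ℕ → ℝ} {M : ℝ} (hΦ : IsMusielakOrlicz Φ)
    (hM : 0 < M) (hD : CondDiamond a M) {t u v : ℕ → ℝ}
    (ht : ∀ k, 0 ≤ t k) (hu : ∀ k, 0 ≤ u k) (hv : ∀ k, 0 ≤ v k)
    (h2 : ∀ k, v (2 * k) ≤ t k + u k) (h2' : ∀ k, v (2 * k + 1) ≤ t k + u k)
    (hrt : ∀ n, Summable fun k => |a n k| * t k) (hru : ∀ n, Summable fun k => |a n k| * u k)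
    {σt σu : ℝ} (hσt : σt ∈ OpAdm Φ a t) (hσu : σu ∈ OpAdm Φ a u) :
    M * (σt + σu) ∈ OpAdm Φ a v := by
  obtain ⟨hσt0, hsumt, hlet⟩ := hσt
  obtain ⟨hσu0, hsumu, hleu⟩ := hσu
  obtain ⟨-, hsv, hle⟩ := opPair_sigma hΦ hM hD ht hu hv h2 h2' hrt hru hσt0 hσu0 hsumt hsumu
  refine ⟨by positivity, hsv, hle.trans ?_⟩
  have hστ : 0 < σt + σu := by linarith
  have e1 : (0:ℝ) ≤ σt / (σt + σu) := by positivity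
  have e2 : (0:ℝ) ≤ σu / (σt + σu) := by positivity
  calc σt / (σt + σu) * (∑' n, Φ n (OpRow a t n / σt)) +
        σu / (σt + σu) * (∑' n, Φ n (OpRow a u n / σu))
      ≤ σt / (σt + σu) * 1 + σu / (σt + σu) * 1 :=
        add_le_add (mul_le_mul_of_nonneg_left hlet e1) (mul_le_mul_of_nonneg_left hleu e2)
    _ = 1 := by field_simp

end Aux4
section Aux5
open Pointwise

lemma opRow_smul {a : ℕ → ℕ → ℝ} {t : ℕ → ℝ} (c : ℝ) (n : ℕ) :
    OpRow a (fun k => c * t k) n = c * OpRow a t n := by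
  simp only [OpRow]
  rw [← tsum_mul_left]
  congr 1; funext k; ring

lemma opAdm_smul {Φ : ℕ → ℝ → ℝ} {a : ℕ → ℕ → ℝ} {t : ℕ → ℝ} {c : ℝ} (hc : 0 < c) :
    OpAdm Φ a (fun k => c * t k) = c • OpAdm Φ a t := by
  ext σ
  rw [Set.mem_smul_set_iff_inv_smul_mem₀ hc.ne']
  have hdiv : ∀ n, (∑' k, |a n k| * (c * t k)) / σ = (∑' k, |a n k| * t k) / (c⁻¹ * σ) := by
    intro n
    have : (∑' k, |a n k| * (c * t k)) = c * ∑' k, |a n k| * t k := opRow_smul c n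
    rw [this]
    rcases eq_or_ne σ 0 with h | h
    · simp [h]
    · field_simp
  constructor
  · rintro ⟨h1, h2, h3⟩
    refine ⟨by positivity, ?_, ?_⟩
    · simpa only [smul_eq_mul, ← hdiv] using h2
    · simpa only [smul_eq_mul, ← hdiv] using h3
  · rintro ⟨h1, h2, h3⟩
    have h1' : 0 < σ := by
      rw [smul_eq_mul] at h1
      nlinarith [inv_pos.2 hc]
    refine ⟨h1', ?_, ?_⟩
    · simpa only [smul_eq_mul, hdiv] using h2
    · simpa only [smul_eq_mul, hdiv] using h3

lemma opANorm_smul {Φ : ℕ → ℝ → ℝ} {a : ℕ → ℕ → ℝ} {t : ℕ → ℝ} {c : ℝ} (hc : 0 < c) :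
    OpANorm Φ a (fun k => c * t k) = c * OpANorm Φ a t := by
  rw [opANorm_eq, opANorm_eq, opAdm_smul hc, Real.sInf_smul_of_nonneg hc.le, smul_eq_mul]

lemma opAdm_zero {Φ : ℕ → ℝ → ℝ} (hΦ : IsMusielakOrlicz Φ) (a : ℕ → ℕ → ℝ) :
    OpAdm Φ a (fun _ => (0:ℝ)) = Set.Ioi 0 := by
  ext σ
  simp only [OpAdm, Set.mem_setOf_eq, Set.mem_Ioi, mul_zero, tsum_zero, zero_div]
  constructor
  · exact fun h => h.1
  · intro h
    have hz : (fun n => Φ n 0) = fun _ => (0:ℝ) := funext fun n => (hΦ n).map_zero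
    refine ⟨h, by rw [hz]; exact summable_zero, by rw [hz, tsum_zero]; norm_num⟩

lemma opANorm_zero {Φ : ℕ → ℝ → ℝ} (hΦ : IsMusielakOrlicz Φ) (a : ℕ → ℕ → ℝ) :
    OpANorm Φ a (fun _ => (0:ℝ)) = 0 := by
  rw [opANorm_eq, opAdm_zero hΦ a, csInf_Ioi]

end Aux5
section Aux6

variable {E F : Type} [NormedAddCommGroup E] [NormedSpace ℝ E] [CompleteSpace E]
  [NormedAddCommGroup F] [NormedSpace ℝ F] [CompleteSpace F] (s : SNumberSeq)

lemma sNum_zero (k : ℕ) : s.s E F (0 : E →L[ℝ] F) k = 0 := by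
  apply s.rank
  have : LinearMap.range ((0 : E →L[ℝ] F) : E →ₗ[ℝ] F) = ⊥ := by
    ext x; simp [LinearMap.mem_range, eq_comm]
  rw [this]
  simp

lemma sNum_smul_le (α : ℝ) (T : E →L[ℝ] F) (k : ℕ) :
    s.s E F (α • T) k ≤ |α| * s.s E F T k := by
  have h := s.ideal E F E F (α • ContinuousLinearMap.id ℝ F) T (ContinuousLinearMap.id ℝ E) k
  have he : ((α • ContinuousLinearMap.id ℝ F).comp T).comp (ContinuousLinearMap.id ℝ E)
      = α • T := by ext x; simp
  rw [he] at h
  refine h.trans ?_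
  have h1 : ‖α • ContinuousLinearMap.id ℝ F‖ ≤ |α| := by
    refine (norm_smul_le α (ContinuousLinearMap.id ℝ F)).trans ?_
    rw [Real.norm_eq_abs]
    calc |α| * ‖ContinuousLinearMap.id ℝ F‖ ≤ |α| * 1 :=
          mul_le_mul_of_nonneg_left ContinuousLinearMap.norm_id_le (abs_nonneg _)
      _ = |α| := mul_one _
  calc ‖α • ContinuousLinearMap.id ℝ F‖ * s.s E F T k * ‖ContinuousLinearMap.id ℝ E‖
      ≤ |α| * s.s E F T k * 1 := by
        apply mul_le_mul
        · exact mul_le_mul_of_nonneg_right h1 (s.nonneg E F T k)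
        · exact ContinuousLinearMap.norm_id_le
        · exact norm_nonneg _
        · exact mul_nonneg (abs_nonneg _) (s.nonneg E F T k)
    _ = |α| * s.s E F T k := mul_one _

lemma sNum_smul (α : ℝ) (T : E →L[ℝ] F) (k : ℕ) :
    s.s E F (α • T) k = |α| * s.s E F T k := by
  rcases eq_or_ne α 0 with rfl | hα
  · simp [sNum_zero s k]
  · refine le_antisymm (sNum_smul_le s α T k) ?_
    have h := sNum_smul_le s α⁻¹ (α • T) k
    rw [inv_smul_smul₀ hα, abs_inv] at h
    have hα' : 0 < |α| := abs_pos.2 hα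
    rw [← mul_le_mul_iff_right₀ (inv_pos.2 hα'), ← mul_assoc, inv_mul_cancel₀ hα'.ne', one_mul]
    linarith [h]

lemma sNum_le_add_norm (S T : E →L[ℝ] F) (k : ℕ) :
    s.s E F S k ≤ s.s E F T k + ‖S - T‖ := by
  have h := s.additive E F T (S - T) k 0
  rw [add_sub_cancel] at h
  rw [s.norm_eq E F (S - T)] at h
  simpa using h

lemma sNum_dist_le (S T : E →L[ℝ] F) (k : ℕ) :
    |s.s E F S k - s.s E F T k| ≤ ‖S - T‖ := by
  rw [abs_sub_le_iff]
  constructor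
  · linarith [sNum_le_add_norm s S T k]
  · have := sNum_le_add_norm s T S k
    rw [norm_sub_rev] at this
    linarith

lemma sNum_add_le (S T : E →L[ℝ] F) (k : ℕ) :
    s.s E F (S + T) (2 * k) ≤ s.s E F S k + s.s E F T k ∧
    s.s E F (S + T) (2 * k + 1) ≤ s.s E F S k + s.s E F T k := by
  constructor
  · have := s.additive E F S T k k
    rwa [two_mul]
  · have h := s.additive E F S T k (k + 1)
    have h2 : s.s E F T (k + 1) ≤ s.s E F T k := s.antitone E F T (Nat.le_succ k)
    have he : k + (k + 1) = 2 * k + 1 := by ring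
    rw [he] at h
    linarith

end Aux6
section Aux7
open Pointwise

lemma tendsto_orlicz_comp {φ : ℝ → ℝ} (h : IsOrliczFn φ) {ι : Type*} {L : Filter ι}
    {g : ι → ℝ} {x : ℝ} (hg : Filter.Tendsto g L (𝓝 x)) (hgnn : ∀ l, 0 ≤ g l) (hx : 0 ≤ x) :
    Filter.Tendsto (fun l => φ (g l)) L (𝓝 (φ x)) := by
  have hg' : Filter.Tendsto g L (𝓝[Set.Ici 0] x) :=
    tendsto_nhdsWithin_of_tendsto_nhds_of_eventually_within g hg
      (Filter.Eventually.of_forall hgnn)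
  exact (h.continuousOn x hx).tendsto.comp hg'

lemma opMemL_zero {Φ : ℕ → ℝ → ℝ} (hΦ : IsMusielakOrlicz Φ) (a : ℕ → ℕ → ℝ) :
    OpMemL Φ a (fun _ => (0:ℝ)) := by
  refine ⟨fun n => by simpa using summable_zero, 1, one_pos, ?_⟩
  have hz : (fun n => Φ n ((∑' k, |a n k| * (0:ℝ)) / 1)) = fun _ => (0:ℝ) := by
    funext n; simp [(hΦ n).map_zero]
  rw [hz]
  exact summable_zero

lemma opMemL_smul {Φ : ℕ → ℝ → ℝ} {a : ℕ → ℕ → ℝ} {t : ℕ → ℝ} (hΦ : IsMusielakOrlicz Φ)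
    (ht : ∀ k, 0 ≤ t k) {c : ℝ} (hc : 0 < c) (hm : OpMemL Φ a t) :
    OpMemL Φ a (fun k => c * t k) := by
  have hrows : ∀ n, Summable fun k => |a n k| * (c * t k) := by
    intro n
    have he : (fun k => |a n k| * (c * t k)) = fun k => c * (|a n k| * t k) := by
      funext k; ring
    rw [he]
    exact (hm.1 n).mul_left c
  obtain ⟨σ, hσ⟩ := opAdm_nonempty hΦ ht hm
  have hmem : c * σ ∈ OpAdm Φ a (fun k => c * t k) := by
    rw [opAdm_smul hc]
    exact ⟨σ, hσ, rfl⟩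
  exact ⟨hrows, c * σ, hmem.1, hmem.2.1⟩

lemma opANorm_pair_le {Φ : ℕ → ℝ → ℝ} {a : ℕ → ℕ → ℝ} {M : ℝ} (hΦ : IsMusielakOrlicz Φ)
    (hM : 0 < M) (hD : CondDiamond a M) {t u v : ℕ → ℝ}
    (ht : ∀ k, 0 ≤ t k) (hu : ∀ k, 0 ≤ u k) (hv : ∀ k, 0 ≤ v k)
    (h2 : ∀ k, v (2 * k) ≤ t k + u k) (h2' : ∀ k, v (2 * k + 1) ≤ t k + u k)
    (hmt : OpMemL Φ a t) (hmu : OpMemL Φ a u) :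
    OpANorm Φ a v ≤ M * (OpANorm Φ a t + OpANorm Φ a u) := by
  have hAne := opAdm_nonempty hΦ ht hmt
  have hBne := opAdm_nonempty hΦ hu hmu
  have key : ∀ σ ∈ OpAdm Φ a t, ∀ τ ∈ OpAdm Φ a u, OpANorm Φ a v ≤ M * (σ + τ) :=
    fun σ hσ τ hτ => opANorm_le_of_mem (opAdm_pair hΦ hM hD ht hu hv h2 h2' hmt.1 hmu.1 hσ hτ)
  have step1 : ∀ σ ∈ OpAdm Φ a t, OpANorm Φ a v ≤ M * σ + M * sInf (OpAdm Φ a u) := by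
    intro σ hσ
    have h1 : (OpANorm Φ a v - M * σ) / M ≤ sInf (OpAdm Φ a u) := by
      refine le_csInf hBne fun τ hτ => ?_
      rw [div_le_iff₀ hM]
      have := key σ hσ τ hτ
      linarith
    rw [div_le_iff₀ hM] at h1
    linarith
  have h2f : (OpANorm Φ a v - M * sInf (OpAdm Φ a u)) / M ≤ sInf (OpAdm Φ a t) := by
    refine le_csInf hAne fun σ hσ => ?_
    rw [div_le_iff₀ hM]
    have := step1 σ hσ
    linarith
  rw [div_le_iff₀ hM] at h2f
  rw [opANorm_eq Φ a t, opANorm_eq Φ a u]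
  linarith

end Aux7
/-- for `A ∈ 𝒜` satisfying condition (♦) with constant `M`,
`L_Φ^A(E,F)` is a linear subspace of `L(E,F)`, `‖·‖_Φ^A` is a quasi-norm on it
(with constant `max M 1`), it is complete, and the inclusion into `L(E,F)` is
continuous. -/
theorem opLPhiA_quasiBanach
    (Φ : ℕ → ℝ → ℝ) (hΦ : IsMusielakOrlicz Φ)
    (a : ℕ → ℕ → ℝ) (hA : MatrixClassA a)
    (M : ℝ) (hM : 0 < M) (hD : CondDiamond a M)
    (s : SNumberSeq)
    (E F : Type) [NormedAddCommGroup E] [NormedSpace ℝ E] [CompleteSpace E]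
    [NormedAddCommGroup F] [NormedSpace ℝ F] [CompleteSpace F] :
    (∀ S T : E →L[ℝ] F, OpMemL Φ a (s.s E F S) → OpMemL Φ a (s.s E F T) →
      OpMemL Φ a (s.s E F (S + T))) ∧
    (∀ (α : ℝ) (T : E →L[ℝ] F), OpMemL Φ a (s.s E F T) →
      OpMemL Φ a (s.s E F (α • T))) ∧
    (∀ T : E →L[ℝ] F, OpMemL Φ a (s.s E F T) →
      (OpANorm Φ a (s.s E F T) = 0 ↔ T = 0)) ∧
    (∀ (α : ℝ) (T : E →L[ℝ] F), OpMemL Φ a (s.s E F T) →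
      OpANorm Φ a (s.s E F (α • T)) = |α| * OpANorm Φ a (s.s E F T)) ∧
    (∀ S T : E →L[ℝ] F, OpMemL Φ a (s.s E F S) → OpMemL Φ a (s.s E F T) →
      OpANorm Φ a (s.s E F (S + T)) ≤
        max M 1 * (OpANorm Φ a (s.s E F S) + OpANorm Φ a (s.s E F T))) ∧
    (∀ f : ℕ → (E →L[ℝ] F), (∀ m, OpMemL Φ a (s.s E F (f m))) →
      (∀ ε > (0 : ℝ), ∃ N : ℕ, ∀ m ≥ N, ∀ l ≥ N,
        OpANorm Φ a (s.s E F (f m - f l)) < ε) →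
      ∃ T : E →L[ℝ] F, OpMemL Φ a (s.s E F T) ∧
        Tendsto (fun m => OpANorm Φ a (s.s E F (f m - T))) atTop (𝓝 0)) ∧
    (∃ C > (0 : ℝ), ∀ T : E →L[ℝ] F, OpMemL Φ a (s.s E F T) →
      ‖T‖ ≤ C * OpANorm Φ a (s.s E F T)) := by

  classical
  have htnn : ∀ (X : E →L[ℝ] F) (k : ℕ), 0 ≤ s.s E F X k := fun X k => s.nonneg E F X k
  have hrows : ∀ X : E →L[ℝ] F, OpMemL Φ a (s.s E F X) →
      ∀ n, Summable fun k => |a n k| * s.s E F X k := fun X hX => hX.1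
  -- Part 1: closure under addition
  have part1 : ∀ S T : E →L[ℝ] F, OpMemL Φ a (s.s E F S) → OpMemL Φ a (s.s E F T) →
      OpMemL Φ a (s.s E F (S + T)) := by
    intro S T hS hT
    exact opMemL_pair hΦ hM hD (htnn S) (htnn T) (htnn (S + T))
      (fun k => (sNum_add_le s S T k).1) (fun k => (sNum_add_le s S T k).2) hS hT
  -- Part 2: closure under scalar multiplication
  have part2 : ∀ (α : ℝ) (T : E →L[ℝ] F), OpMemL Φ a (s.s E F T) →
      OpMemL Φ a (s.s E F (α • T)) := by
    intro α T hT
    rcases eq_or_ne α 0 with rfl | hα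
    · have he : s.s E F ((0:ℝ) • T) = fun _ => (0:ℝ) := by
        funext k; rw [zero_smul]; exact sNum_zero s k
      rw [he]
      exact opMemL_zero hΦ a
    · have he : s.s E F (α • T) = fun k => |α| * s.s E F T k := funext (sNum_smul s α T)
      rw [he]
      exact opMemL_smul hΦ (htnn T) (abs_pos.2 hα) hT
  -- Part 4 (needed early): homogeneity
  have part4 : ∀ (α : ℝ) (T : E →L[ℝ] F), OpMemL Φ a (s.s E F T) →
      OpANorm Φ a (s.s E F (α • T)) = |α| * OpANorm Φ a (s.s E F T) := by
    intro α T hT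
    rcases eq_or_ne α 0 with rfl | hα
    · have he : s.s E F ((0:ℝ) • T) = fun _ => (0:ℝ) := by
        funext k; rw [zero_smul]; exact sNum_zero s k
      rw [he, opANorm_zero hΦ a, abs_zero, zero_mul]
    · have he : s.s E F (α • T) = fun k => |α| * s.s E F T k := funext (sNum_smul s α T)
      rw [he, opANorm_smul (abs_pos.2 hα)]
  -- Part 3: norm zero iff zero
  have part3 : ∀ T : E →L[ℝ] F, OpMemL Φ a (s.s E F T) →
      (OpANorm Φ a (s.s E F T) = 0 ↔ T = 0) := by
    intro T hT
    constructor
    · intro h0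
      obtain ⟨C, hC0, hCle⟩ := opANorm_lower hΦ hA
      have hlow : s.s E F T 0 / C ≤ OpANorm Φ a (s.s E F T) := by
        rw [opANorm_eq]
        refine le_csInf (opAdm_nonempty hΦ (htnn T) hT) fun σ hσ => ?_
        rw [div_le_iff₀ hC0]
        have := hCle (s.s E F T) (htnn T) hT.1 σ hσ
        linarith
      rw [h0] at hlow
      have h1 : s.s E F T 0 ≤ 0 := by
        rw [div_le_iff₀ hC0] at hlow
        linarith
      have h2 : ‖T‖ ≤ 0 := by rw [← s.norm_eq E F T]; exact h1
      exact norm_le_zero_iff.1 h2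
    · intro h0
      subst h0
      have he : s.s E F (0 : E →L[ℝ] F) = fun _ => (0:ℝ) := funext (sNum_zero s)
      rw [he]
      exact opANorm_zero hΦ a
  -- Part 5: quasi-triangle inequality
  have part5 : ∀ S T : E →L[ℝ] F, OpMemL Φ a (s.s E F S) → OpMemL Φ a (s.s E F T) →
      OpANorm Φ a (s.s E F (S + T)) ≤
        max M 1 * (OpANorm Φ a (s.s E F S) + OpANorm Φ a (s.s E F T)) := by
    intro S T hS hT
    have h1 := opANorm_pair_le hΦ hM hD (htnn S) (htnn T) (htnn (S + T))
      (fun k => (sNum_add_le s S T k).1) (fun k => (sNum_add_le s S T k).2) hS hT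
    refine h1.trans ?_
    exact mul_le_mul_of_nonneg_right (le_max_left M 1)
      (add_nonneg (opANorm_nonneg _ _ _) (opANorm_nonneg _ _ _))
  -- Part 7: continuity of the inclusion
  have part7 : ∃ C > (0:ℝ), ∀ T : E →L[ℝ] F, OpMemL Φ a (s.s E F T) →
      ‖T‖ ≤ C * OpANorm Φ a (s.s E F T) := by
    obtain ⟨C, hC0, hCle⟩ := opANorm_lower hΦ hA
    refine ⟨C, hC0, fun T hT => ?_⟩
    have hlow : ‖T‖ / C ≤ OpANorm Φ a (s.s E F T) := by
      rw [opANorm_eq]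
      refine le_csInf (opAdm_nonempty hΦ (htnn T) hT) fun σ hσ => ?_
      rw [div_le_iff₀ hC0]
      have := hCle (s.s E F T) (htnn T) hT.1 σ hσ
      rw [s.norm_eq E F T] at this
      linarith
    rw [div_le_iff₀ hC0] at hlow
    linarith
  -- Part 6: completeness
  have part6 : ∀ f : ℕ → (E →L[ℝ] F), (∀ m, OpMemL Φ a (s.s E F (f m))) →
      (∀ ε > (0 : ℝ), ∃ N : ℕ, ∀ m ≥ N, ∀ l ≥ N,
        OpANorm Φ a (s.s E F (f m - f l)) < ε) →
      ∃ T : E →L[ℝ] F, OpMemL Φ a (s.s E F T) ∧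
        Tendsto (fun m => OpANorm Φ a (s.s E F (f m - T))) atTop (𝓝 0) := by
    intro f hmem hc
    obtain ⟨C, hC0, hCle⟩ := opANorm_lower hΦ hA
    have hmemdiff : ∀ m l, OpMemL Φ a (s.s E F (f m - f l)) := by
      intro m l
      have h1 := part2 (-1) (f l) (hmem l)
      have h2 := part1 (f m) ((-1 : ℝ) • f l) (hmem m) h1
      have he : f m + (-1 : ℝ) • f l = f m - f l := by
        rw [neg_one_smul]; exact (sub_eq_add_neg _ _).symm
      rwa [he] at h2
    have hnormle : ∀ m l, ‖f m - f l‖ ≤ C * OpANorm Φ a (s.s E F (f m - f l)) := by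
      intro m l
      have hlow : ‖f m - f l‖ / C ≤ OpANorm Φ a (s.s E F (f m - f l)) := by
        rw [opANorm_eq]
        refine le_csInf (opAdm_nonempty hΦ (htnn _) (hmemdiff m l)) fun σ hσ => ?_
        rw [div_le_iff₀ hC0]
        have := hCle (s.s E F (f m - f l)) (htnn _) (hmemdiff m l).1 σ hσ
        rw [s.norm_eq E F (f m - f l)] at this
        linarith
      rw [div_le_iff₀ hC0] at hlow
      linarith
    have hcs : CauchySeq f := by
      rw [Metric.cauchySeq_iff]
      intro ε hε
      obtain ⟨N, hN⟩ := hc (ε / (2 * C)) (by positivity)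
      refine ⟨N, fun m hm l hl => ?_⟩
      rw [dist_eq_norm]
      calc ‖f m - f l‖ ≤ C * OpANorm Φ a (s.s E F (f m - f l)) := hnormle m l
        _ < C * (ε / (2 * C)) := by
            exact mul_lt_mul_of_pos_left (hN m hm l hl) hC0
        _ = ε / 2 := by field_simp
        _ < ε := by linarith
    obtain ⟨T, hT⟩ := cauchySeq_tendsto_of_complete hcs
    -- convergence of s-numbers
    have htendk : ∀ (m : ℕ) (k : ℕ), Tendsto (fun l => s.s E F (f m - f l) k) atTop
        (𝓝 (s.s E F (f m - T) k)) := by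
      intro m k
      rw [tendsto_iff_dist_tendsto_zero]
      have hb : ∀ l, dist (s.s E F (f m - f l) k) (s.s E F (f m - T) k) ≤ ‖T - f l‖ := by
        intro l
        rw [Real.dist_eq]
        have hd := sNum_dist_le s (f m - f l) (f m - T) k
        have he : (f m - f l) - (f m - T) = T - f l := by abel
        rwa [he] at hd
      have hT0 : Tendsto (fun l => ‖T - f l‖) atTop (𝓝 0) := by
        have := tendsto_iff_norm_sub_tendsto_zero.1 hT
        have he : (fun l => ‖f l - T‖) = fun l => ‖T - f l‖ := by
          funext l; rw [norm_sub_rev]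
        rwa [he] at this
      exact squeeze_zero (fun l => dist_nonneg) hb hT0
    -- the key approximation claim
    have key : ∀ ε > (0:ℝ), ∃ N : ℕ, ∀ m ≥ N,
        (∀ n, Summable fun k => |a n k| * s.s E F (f m - T) k) ∧
        ε ∈ OpAdm Φ a (s.s E F (f m - T)) := by
      intro ε hε
      obtain ⟨N, hN⟩ := hc ε hε
      refine ⟨N, fun m hm => ?_⟩
      have hadm : ∀ l, l ≥ N → ε ∈ OpAdm Φ a (s.s E F (f m - f l)) := by
        intro l hl
        have h1 : OpANorm Φ a (s.s E F (f m - f l)) < ε := hN m hm l hl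
        rw [opANorm_eq] at h1
        obtain ⟨σ, hσ, hσε⟩ :=
          exists_lt_of_csInf_lt (opAdm_nonempty hΦ (htnn _) (hmemdiff m l)) h1
        exact opAdm_mono hΦ (htnn _) hσ hσε.le
      have hfin : ∀ (N' K l : ℕ), l ≥ N →
          (∑ n ∈ Finset.range N',
            Φ n ((∑ k ∈ Finset.range K, |a n k| * s.s E F (f m - f l) k) / ε)) ≤ 1 := by
        intro N' K l hl
        obtain ⟨hε0, hsuml, hlel⟩ := hadm l hl
        have hrowl := (hmemdiff m l).1
        have step : ∀ n, Φ n ((∑ k ∈ Finset.range K, |a n k| * s.s E F (f m - f l) k) / ε)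
            ≤ Φ n (OpRow a (s.s E F (f m - f l)) n / ε) := by
          intro n
          apply orlicz_mono (hΦ n)
          · exact div_nonneg (Finset.sum_nonneg fun k _ =>
              mul_nonneg (abs_nonneg _) (htnn _ k)) hε.le
          · gcongr
            exact Summable.sum_le_tsum _ (fun k _ => mul_nonneg (abs_nonneg _) (htnn _ k)) (hrowl n)
        calc (∑ n ∈ Finset.range N',
              Φ n ((∑ k ∈ Finset.range K, |a n k| * s.s E F (f m - f l) k) / ε))
            ≤ ∑ n ∈ Finset.range N', Φ n (OpRow a (s.s E F (f m - f l)) n / ε) :=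
              Finset.sum_le_sum fun n _ => step n
          _ ≤ ∑' n, Φ n (OpRow a (s.s E F (f m - f l)) n / ε) :=
              Summable.sum_le_tsum _ (fun n _ => orlicz_nonneg (hΦ n)
                (div_nonneg (opRow_nonneg (htnn _) n) hε.le)) hsuml
          _ ≤ 1 := hlel
      have hfinT : ∀ (N' K : ℕ),
          (∑ n ∈ Finset.range N',
            Φ n ((∑ k ∈ Finset.range K, |a n k| * s.s E F (f m - T) k) / ε)) ≤ 1 := by
        intro N' K
        have hq : ∀ n, Tendsto
            (fun l => (∑ k ∈ Finset.range K, |a n k| * s.s E F (f m - f l) k) / ε)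
            atTop (𝓝 ((∑ k ∈ Finset.range K, |a n k| * s.s E F (f m - T) k) / ε)) := by
          intro n
          apply Tendsto.div_const
          exact tendsto_finset_sum _ fun k _ => (htendk m k).const_mul _
        have hcomp : ∀ n, Tendsto
            (fun l => Φ n ((∑ k ∈ Finset.range K, |a n k| * s.s E F (f m - f l) k) / ε))
            atTop (𝓝 (Φ n ((∑ k ∈ Finset.range K, |a n k| * s.s E F (f m - T) k) / ε))) := by
          intro n
          refine tendsto_orlicz_comp (hΦ n) (hq n) (fun l => ?_) ?_
          · exact div_nonneg (Finset.sum_nonneg fun k _ =>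
              mul_nonneg (abs_nonneg _) (htnn _ k)) hε.le
          · exact div_nonneg (Finset.sum_nonneg fun k _ =>
              mul_nonneg (abs_nonneg _) (htnn _ k)) hε.le
        have hlim := tendsto_finset_sum (Finset.range N') fun n _ => hcomp n
        exact le_of_tendsto hlim (Filter.eventually_atTop.2 ⟨N, fun l hl => hfin N' K l hl⟩)
      have hrowT : ∀ n, Summable fun k => |a n k| * s.s E F (f m - T) k := by
        intro n
        obtain ⟨B, hB0, hBle⟩ := orlicz_one_lt (hΦ n)
        refine summable_of_sum_range_le (c := B * ε)
          (fun k => mul_nonneg (abs_nonneg _) (htnn _ k)) fun K => ?_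
        have h1 : Φ n ((∑ k ∈ Finset.range K, |a n k| * s.s E F (f m - T) k) / ε) ≤ 1 := by
          have h2 := hfinT (n + 1) K
          have h3 : Φ n ((∑ k ∈ Finset.range K, |a n k| * s.s E F (f m - T) k) / ε)
              ≤ ∑ n' ∈ Finset.range (n + 1),
                Φ n' ((∑ k ∈ Finset.range K, |a n' k| * s.s E F (f m - T) k) / ε) :=
            Finset.single_le_sum (fun i _ => orlicz_nonneg (hΦ i)
              (div_nonneg (Finset.sum_nonneg fun k _ =>
                mul_nonneg (abs_nonneg _) (htnn _ k)) hε.le))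
              (Finset.self_mem_range_succ n)
          linarith
        have h4 := hBle _ (div_nonneg (Finset.sum_nonneg fun k _ =>
          mul_nonneg (abs_nonneg _) (htnn _ k)) hε.le) h1
        rw [div_le_iff₀ hε] at h4
        linarith
      have hΦrow : ∀ N' : ℕ,
          (∑ n ∈ Finset.range N', Φ n (OpRow a (s.s E F (f m - T)) n / ε)) ≤ 1 := by
        intro N'
        have hlim : ∀ n, Tendsto
            (fun K => (∑ k ∈ Finset.range K, |a n k| * s.s E F (f m - T) k) / ε)
            atTop (𝓝 (OpRow a (s.s E F (f m - T)) n / ε)) :=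
          fun n => (hrowT n).hasSum.tendsto_sum_nat.div_const ε
        have hcomp : ∀ n, Tendsto
            (fun K => Φ n ((∑ k ∈ Finset.range K, |a n k| * s.s E F (f m - T) k) / ε))
            atTop (𝓝 (Φ n (OpRow a (s.s E F (f m - T)) n / ε))) := by
          intro n
          refine tendsto_orlicz_comp (hΦ n) (hlim n) (fun K => ?_) ?_
          · exact div_nonneg (Finset.sum_nonneg fun k _ =>
              mul_nonneg (abs_nonneg _) (htnn _ k)) hε.le
          · exact div_nonneg (opRow_nonneg (htnn _) n) hε.le
        have hlim2 := tendsto_finset_sum (Finset.range N') fun n _ => hcomp n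
        exact le_of_tendsto hlim2 (Filter.Eventually.of_forall fun K => hfinT N' K)
      have hnn : ∀ n, 0 ≤ Φ n (OpRow a (s.s E F (f m - T)) n / ε) := fun n =>
        orlicz_nonneg (hΦ n) (div_nonneg (opRow_nonneg (htnn _) n) hε.le)
      exact ⟨hrowT, hε, summable_of_sum_range_le hnn hΦrow,
        Summable.tsum_le_of_sum_range_le (summable_of_sum_range_le hnn hΦrow) hΦrow⟩
    -- membership of the limit
    obtain ⟨N₁, hN₁⟩ := key 1 one_pos
    have hmemd : OpMemL Φ a (s.s E F (f N₁ - T)) := by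
      obtain ⟨hrow1, hadm1⟩ := hN₁ N₁ le_rfl
      exact ⟨hrow1, 1, one_pos, hadm1.2.1⟩
    have hmemT : OpMemL Φ a (s.s E F T) := by
      have h1 := part2 (-1) (f N₁ - T) hmemd
      have h2 := part1 (f N₁) ((-1 : ℝ) • (f N₁ - T)) (hmem N₁) h1
      have he : f N₁ + (-1 : ℝ) • (f N₁ - T) = T := by
        rw [neg_one_smul]; abel
      rwa [he] at h2
    refine ⟨T, hmemT, ?_⟩
    rw [Metric.tendsto_atTop]
    intro ε hε
    obtain ⟨N, hN⟩ := key (ε / 2) (by positivity)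
    refine ⟨N, fun m hm => ?_⟩
    have h1 : OpANorm Φ a (s.s E F (f m - T)) ≤ ε / 2 := by
      rw [opANorm_eq]
      exact csInf_le opRow_bddBelow (hN m hm).2
    have h2 : 0 ≤ OpANorm Φ a (s.s E F (f m - T)) := opANorm_nonneg _ _ _
    rw [Real.dist_eq, sub_zero, abs_of_nonneg h2]
    linarith
  exact ⟨part1, part2, part3, part4, part5, part6, part7⟩
end
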